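/- arXiv:1810.05130 — 2 statements merged into one kernel-verified Lean document; each statement's English description precedes it below -/
import Mathlib

section
/- For s > 0 let p_s : ℕ → ℝ be the Poisson probability mass function p_s(x) = e^{−s}·s^x/x!, and let H(s) = −Σ_{x=0}^∞ p_s(x)·log p_s(x) be the entropy of the Poisson distribution with mean s. There exist constants C > 0 and s₀ ≥ 1 such that for all s ≥ s₀, |H(s) − (1/2)·log(2πe·s)| ≤ C·s^{−1/4}. -/
open Real Filter Topology

namespace PE

noncomputable def q (s : ℝ) (x : ℕ) : ℝ := s ^ x / (Nat.factorial x : ℝ)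

lemma q_nonneg {s : ℝ} (hs : 0 ≤ s) (x : ℕ) : 0 ≤ q s x := by
  unfold q; positivity

lemma q_pos {s : ℝ} (hs : 0 < s) (x : ℕ) : 0 < q s x := by
  unfold q; positivity

lemma hasSum_q (s : ℝ) : HasSum (q s) (exp s) := by
  rw [Real.exp_eq_exp_ℝ]
  exact NormedSpace.expSeries_div_hasSum_exp s

lemma summable_q (s : ℝ) : Summable (q s) := (hasSum_q s).summable

lemma tsum_q (s : ℝ) : ∑' x, q s x = exp s := (hasSum_q s).tsum_eq

lemma summable_dom (s : ℝ) (hs : 0 ≤ s) (f : ℕ → ℝ) (C b : ℝ)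
    (h : ∀ x, |f x| ≤ C * b ^ x) : Summable fun x => q s x * f x := by
  apply Summable.of_abs
  apply Summable.of_nonneg_of_le (fun x => abs_nonneg _) (fun x => ?_)
    ((Real.summable_pow_div_factorial (s * b)).mul_left C)
  rw [abs_mul, abs_of_nonneg (q_nonneg hs x)]
  calc q s x * |f x| ≤ q s x * (C * b ^ x) :=
        mul_le_mul_of_nonneg_left (h x) (q_nonneg hs x)
    _ = C * ((s * b) ^ x / (Nat.factorial x : ℝ)) := by unfold q; rw [mul_pow]; ring

lemma cast_succ_le_two_pow (x : ℕ) : ((x : ℝ) + 1) ≤ 2 ^ x := by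
  have := Nat.lt_two_pow_self (n := x)
  have : (x : ℝ) + 1 ≤ ((2 ^ x : ℕ) : ℝ) := by exact_mod_cast this
  simpa using this

lemma pow_le_exp (k x : ℕ) : ((x : ℝ)) ^ k ≤ (Nat.factorial k : ℝ) * (exp 1) ^ x := by
  have h1 : ((x : ℝ)) ^ k / (Nat.factorial k : ℝ) ≤ exp (x : ℝ) := by
    refine le_hasSum (hasSum_q (x : ℝ)) k fun j _ => ?_
    unfold q; positivity
  have h2 : exp ((x : ℝ)) = (exp 1) ^ x := by
    rw [← Real.exp_nat_mul]; norm_num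
  have hk : (0:ℝ) < (Nat.factorial k : ℝ) := by exact_mod_cast k.factorial_pos
  rw [div_le_iff₀ hk] at h1
  rw [h2] at h1
  linarith [h1]


section moments
variable {s : ℝ}

lemma key_shift (f : ℕ → ℝ) (x : ℕ) :
    q s (x + 1) * ((((x + 1) : ℕ) : ℝ) * f (x + 1)) = s * (q s x * f (x + 1)) := by
  unfold q
  rw [Nat.factorial_succ]
  have h1 : (Nat.factorial x : ℝ) ≠ 0 := Nat.cast_ne_zero.mpr (Nat.factorial_ne_zero x)
  have h2 : ((x : ℝ) + 1) ≠ 0 := by positivity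
  push_cast
  field_simp
  ring

lemma E_shift (f : ℕ → ℝ) (hf : Summable fun x => q s x * f (x + 1)) :
    ∑' x, q s x * ((x : ℝ) * f x) = s * ∑' x, q s x * f (x + 1) := by
  have heq : (fun x : ℕ => q s (x + 1) * ((((x+1) : ℕ) : ℝ) * f (x + 1)))
      = fun x => s * (q s x * f (x + 1)) := funext (key_shift f)
  have hsum : Summable fun x : ℕ => q s x * ((x : ℝ) * f x) := by
    rw [← summable_nat_add_iff 1]
    exact heq ▸ hf.mul_left s
  rw [hsum.tsum_eq_zero_add]
  simp only [Nat.cast_zero, zero_mul, mul_zero, zero_add]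
  rw [show (fun x : ℕ => q s (x + 1) * ((((x+1) : ℕ) : ℝ) * f (x + 1))) = _ from heq]
  exact tsum_mul_left

lemma summable_pow (hs : 0 ≤ s) (k : ℕ) : Summable fun x => q s x * ((x : ℝ)) ^ k := by
  refine summable_dom s hs _ (Nat.factorial k : ℝ) (exp 1) fun x => ?_
  rw [abs_of_nonneg (by positivity)]
  exact pow_le_exp k x

lemma E_add {f g : ℕ → ℝ} (hf : Summable fun x => q s x * f x)
    (hg : Summable fun x => q s x * g x) :
    ∑' x, q s x * (f x + g x) = (∑' x, q s x * f x) + ∑' x, q s x * g x := by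
  rw [tsum_congr (fun x => mul_add (q s x) (f x) (g x))]
  exact hf.tsum_add hg

lemma E_const (c : ℝ) : ∑' x, q s x * c = c * exp s := by
  rw [tsum_mul_right, tsum_q]; ring

lemma E_X : ∑' x, q s x * (x : ℝ) = s * exp s := by
  have h := E_shift (s := s) (fun _ => (1:ℝ)) (by simpa using summable_q s)
  simp only [mul_one] at h
  rw [h, tsum_q]

lemma summable_cast_pow (hs : 0 ≤ s) (k : ℕ) :
    Summable fun x => q s x * (((x + 1 : ℕ) : ℝ)) ^ k := by
  refine summable_dom s hs _ ((Nat.factorial k : ℝ) * exp 1) (exp 1) fun x => ?_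
  rw [abs_of_nonneg (by positivity)]
  calc (((x + 1 : ℕ) : ℝ)) ^ k ≤ (Nat.factorial k : ℝ) * (exp 1) ^ (x + 1) := pow_le_exp k (x+1)
    _ = (Nat.factorial k : ℝ) * exp 1 * (exp 1) ^ x := by ring

lemma E_X2 (hs : 0 ≤ s) : ∑' x, q s x * ((x : ℝ)) ^ 2 = (s ^ 2 + s) * exp s := by
  have h := E_shift (s := s) (fun y => (y : ℝ)) (summable_cast_pow hs 1 |>.congr
    (fun x => by push_cast; ring))
  rw [tsum_congr (fun x : ℕ => by ring_nf : ∀ x : ℕ, q s x * ((x:ℝ)) ^ 2 = q s x * ((x:ℝ) * (x:ℝ)))]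
  rw [h]
  rw [tsum_congr (fun x : ℕ => by push_cast; ring :
    ∀ x : ℕ, q s x * (((x+1 : ℕ)) : ℝ) = q s x * ((x:ℝ) + 1))]
  rw [E_add (summable_pow hs 1 |>.congr (fun x => by ring)) (by simpa using summable_q s)]
  rw [tsum_congr (fun x : ℕ => by ring : ∀ x : ℕ, q s x * ((x:ℝ)) = q s x * (x:ℝ))]
  rw [E_X]
  rw [tsum_congr (fun x : ℕ => (mul_one (q s x)) : ∀ x : ℕ, q s x * (1:ℝ) = q s x)]
  rw [tsum_q]
  ring

end moments

section moments2
variable {s : ℝ}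
lemma E_smul (c : ℝ) (f : ℕ → ℝ) :
    ∑' x, q s x * (c * f x) = c * ∑' x, q s x * f x := by
  rw [tsum_congr (fun x => mul_left_comm (q s x) c (f x)), tsum_mul_left]

lemma summable_smul {f : ℕ → ℝ} (c : ℝ) (hf : Summable fun x => q s x * f x) :
    Summable fun x => q s x * (c * f x) :=
  (hf.mul_left c).congr fun x => (mul_left_comm c (q s x) (f x))

lemma summable_C (c : ℝ) : Summable fun x : ℕ => q s x * c := (summable_q s).mul_right c

lemma summable_X (hs : 0 ≤ s) : Summable fun x : ℕ => q s x * (x:ℝ) := by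
  have h := summable_pow hs 1
  simpa using h

lemma E_X3 (hs : 0 ≤ s) : ∑' x, q s x * ((x : ℝ)) ^ 3 = (s^3 + 3*s^2 + s) * exp s := by
  have h := E_shift (s := s) (fun y => ((y : ℝ))^2) (summable_cast_pow hs 2)
  have s2 : Summable fun x : ℕ => q s x * (2*(x:ℝ) + 1) := by
    exact ((summable_smul 2 (summable_X hs)).add (summable_C 1)).congr fun x => by ring
  rw [tsum_congr (fun x : ℕ => by ring :
    ∀ x : ℕ, q s x * ((x:ℝ)) ^ 3 = q s x * ((x:ℝ) * ((x:ℝ))^2)), h]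
  rw [tsum_congr (fun x : ℕ => by push_cast; ring :
    ∀ x : ℕ, q s x * ((((x+1:ℕ)):ℝ))^2 = q s x * (((x:ℝ))^2 + (2*(x:ℝ) + 1)))]
  rw [E_add (summable_pow hs 2) s2, E_X2 hs]
  rw [E_add (summable_smul 2 (summable_X hs)) (summable_C 1)]
  rw [E_smul 2 (fun y => (y:ℝ)), E_X, E_const]
  ring

lemma E_X4 (hs : 0 ≤ s) :
    ∑' x, q s x * ((x : ℝ)) ^ 4 = (s^4 + 6*s^3 + 7*s^2 + s) * exp s := by
  have h := E_shift (s := s) (fun y => ((y : ℝ))^3) (summable_cast_pow hs 3)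
  have s1 : Summable fun x : ℕ => q s x * (3*((x:ℝ))^2) := summable_smul 3 (summable_pow hs 2)
  have s2 : Summable fun x : ℕ => q s x * (3*(x:ℝ)) := summable_smul 3 (summable_X hs)
  have s3 : Summable fun x : ℕ => q s x * (1:ℝ) := summable_C 1
  have s23 : Summable fun x : ℕ => q s x * (3*(x:ℝ) + 1) :=
    (s2.add s3).congr fun x => by ring
  have s123 : Summable fun x : ℕ => q s x * (3*((x:ℝ))^2 + (3*(x:ℝ) + 1)) :=
    (s1.add s23).congr fun x => by ring
  rw [tsum_congr (fun x : ℕ => by ring :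
    ∀ x : ℕ, q s x * ((x:ℝ)) ^ 4 = q s x * ((x:ℝ) * ((x:ℝ))^3)), h]
  rw [tsum_congr (fun x : ℕ => by push_cast; ring :
    ∀ x : ℕ, q s x * ((((x+1:ℕ)):ℝ))^3
      = q s x * (((x:ℝ))^3 + (3*((x:ℝ))^2 + (3*(x:ℝ) + 1))))]
  rw [E_add (summable_pow hs 3) s123, E_add s1 s23, E_add s2 s3]
  rw [E_X3 hs, E_smul 3 (fun y => ((y:ℝ))^2), E_X2 hs,
      E_smul 3 (fun y => (y:ℝ)), E_X, E_const]
  ring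

lemma E_poly (hs : 0 ≤ s) (a b c d e : ℝ) :
    ∑' x, q s x * (a + b*(x:ℝ) + c*((x:ℝ))^2 + d*((x:ℝ))^3 + e*((x:ℝ))^4)
      = (a + b*s + c*(s^2+s) + d*(s^3+3*s^2+s) + e*(s^4+6*s^3+7*s^2+s)) * exp s := by
  have sa : Summable fun x : ℕ => q s x * a := summable_C a
  have sb : Summable fun x : ℕ => q s x * (b*(x:ℝ)) := summable_smul b (summable_X hs)
  have sc : Summable fun x : ℕ => q s x * (c*((x:ℝ))^2) := summable_smul c (summable_pow hs 2)
  have sd : Summable fun x : ℕ => q s x * (d*((x:ℝ))^3) := summable_smul d (summable_pow hs 3)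
  have se : Summable fun x : ℕ => q s x * (e*((x:ℝ))^4) := summable_smul e (summable_pow hs 4)
  have sde : Summable fun x : ℕ => q s x * (d*((x:ℝ))^3 + e*((x:ℝ))^4) :=
    (sd.add se).congr fun x => by ring
  have scde : Summable fun x : ℕ => q s x * (c*((x:ℝ))^2 + (d*((x:ℝ))^3 + e*((x:ℝ))^4)) :=
    (sc.add sde).congr fun x => by ring
  have sbcde : Summable fun x : ℕ =>
      q s x * (b*(x:ℝ) + (c*((x:ℝ))^2 + (d*((x:ℝ))^3 + e*((x:ℝ))^4))) :=
    (sb.add scde).congr fun x => by ring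
  rw [tsum_congr (fun x : ℕ => by ring :
    ∀ x : ℕ, q s x * (a + b*(x:ℝ) + c*((x:ℝ))^2 + d*((x:ℝ))^3 + e*((x:ℝ))^4)
      = q s x * (a + (b*(x:ℝ) + (c*((x:ℝ))^2 + (d*((x:ℝ))^3 + e*((x:ℝ))^4)))))]
  rw [E_add sa sbcde, E_add sb scde, E_add sc sde, E_add sd se]
  rw [E_const, E_smul b (fun y => (y:ℝ)), E_X, E_smul c (fun y => ((y:ℝ))^2), E_X2 hs,
      E_smul d (fun y => ((y:ℝ))^3), E_X3 hs, E_smul e (fun y => ((y:ℝ))^4), E_X4 hs]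
  ring

end moments2

lemma q_zero (s : ℝ) : q s 0 = 1 := by simp [q]

lemma E_geom (s b : ℝ) : ∑' x, q s x * b ^ x = exp (s * b) := by
  rw [tsum_congr (fun x : ℕ => by unfold q; rw [mul_pow]; ring :
    ∀ x : ℕ, q s x * b ^ x = q (s*b) x)]
  exact tsum_q (s*b)

lemma summable_geom (s b : ℝ) : Summable fun x : ℕ => q s x * b ^ x :=
  (summable_q (s*b)).congr fun x => by unfold q; rw [mul_pow]; ring

lemma tsum_q_succ (s : ℝ) : ∑' x, q s (x+1) = exp s - 1 := by
  have h := (summable_q s).tsum_eq_zero_add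
  rw [tsum_q, q_zero] at h
  linarith

lemma summable_q_succ (s : ℝ) : Summable fun x : ℕ => q s (x+1) :=
  (summable_nat_add_iff 1).mpr (summable_q s)

lemma q_succ_eq (s : ℝ) (hs : s ≠ 0) (x : ℕ) :
    q s x * (1/((x:ℝ)+1)) = (1/s) * q s (x+1) := by
  unfold q
  rw [Nat.factorial_succ]
  have h1 : (Nat.factorial x : ℝ) ≠ 0 := Nat.cast_ne_zero.mpr (Nat.factorial_ne_zero x)
  have h2 : ((x : ℝ) + 1) ≠ 0 := by positivity
  push_cast
  field_simp
  ring

lemma E_inv (s : ℝ) (hs : s ≠ 0) :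
    ∑' x, q s x * (1/((x:ℝ)+1)) = (exp s - 1)/s := by
  rw [tsum_congr (q_succ_eq s hs), tsum_mul_left, tsum_q_succ]
  ring

lemma summable_inv (s : ℝ) (hs : s ≠ 0) :
    Summable fun x : ℕ => q s x * (1/((x:ℝ)+1)) :=
  ((summable_q_succ s).mul_left (1/s)).congr fun x => (q_succ_eq s hs x).symm

-- log inequalities
lemma logF_deriv {v : ℝ} (hv : -1 < v) :
    HasDerivAt (fun v : ℝ => log (1+v) - (v - v^2/2)) (1/(1+v) - (1 - v)) v := by
  have h1 : HasDerivAt (fun v : ℝ => 1 + v) 1 v := by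
    simpa using (hasDerivAt_id v).const_add 1
  have h2 : HasDerivAt (fun v : ℝ => log (1+v)) (1/(1+v)) v := by
    simpa using h1.log (by linarith)
  have h3 : HasDerivAt (fun v : ℝ => v - v^2/2) (1 - v) v := by
    have := (hasDerivAt_id v).sub ((hasDerivAt_pow 2 v).div_const 2)
    exact this.congr_deriv (by simp)
  exact h2.sub h3

lemma logF_mono : MonotoneOn (fun v : ℝ => log (1+v) - (v - v^2/2))
    (Set.Ici (-(1/2) : ℝ)) := by
  apply monotoneOn_of_deriv_nonneg (convex_Ici _)
  · intro v hv
    have hv' : -1 < v := by simp [Set.mem_Ici] at hv; linarith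
    exact ((logF_deriv hv').differentiableAt).continuousAt.continuousWithinAt
  · intro v hv
    rw [interior_Ici] at hv
    have hv' : -1 < v := by simp [Set.mem_Ioi] at hv; linarith
    exact ((logF_deriv hv').differentiableAt).differentiableWithinAt
  · intro v hv
    rw [interior_Ici] at hv
    simp only [Set.mem_Ioi] at hv
    have hv' : -1 < v := by linarith
    rw [(logF_deriv hv').deriv]
    have h1 : (0:ℝ) < 1 + v := by linarith
    have : 1/(1+v) - (1 - v) = v^2/(1+v) := by field_simp; ring
    rw [this]
    positivity

lemma logG_deriv {v : ℝ} (hv : -1 < v) :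
    HasDerivAt (fun v : ℝ => log (1+v) - (v - v^2/2 + v^3/3)) (1/(1+v) - (1 - v + v^2)) v := by
  have h1 : HasDerivAt (fun v : ℝ => 1 + v) 1 v := by
    simpa using (hasDerivAt_id v).const_add 1
  have h2 : HasDerivAt (fun v : ℝ => log (1+v)) (1/(1+v)) v := by
    simpa using h1.log (by linarith)
  have h3 : HasDerivAt (fun v : ℝ => v - v^2/2 + v^3/3) (1 - v + v^2) v := by
    have := ((hasDerivAt_id v).sub ((hasDerivAt_pow 2 v).div_const 2)).add
      ((hasDerivAt_pow 3 v).div_const 3)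
    exact this.congr_deriv (by simp)
  exact h2.sub h3

lemma logG_anti : AntitoneOn (fun v : ℝ => log (1+v) - (v - v^2/2 + v^3/3))
    (Set.Ici (0 : ℝ)) := by
  apply antitoneOn_of_deriv_nonpos (convex_Ici _)
  · intro v hv
    have hv' : (-1:ℝ) < v := by simp [Set.mem_Ici] at hv; linarith
    exact ((logG_deriv hv').differentiableAt).continuousAt.continuousWithinAt
  · intro v hv
    rw [interior_Ici] at hv
    have hv' : (-1:ℝ) < v := by simp [Set.mem_Ioi] at hv; linarith
    exact ((logG_deriv hv').differentiableAt).differentiableWithinAt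
  · intro v hv
    rw [interior_Ici] at hv
    simp only [Set.mem_Ioi] at hv
    have hv' : (-1:ℝ) < v := by linarith
    rw [(logG_deriv hv').deriv]
    have h1 : (0:ℝ) < 1 + v := by linarith
    have : 1/(1+v) - (1 - v + v^2) = -(v^3/(1+v)) := by field_simp; ring
    rw [this]
    simp only [neg_nonpos]
    positivity

lemma logK_deriv {v : ℝ} (hv : -1 < v) :
    HasDerivAt (fun v : ℝ => log (1+v) - (v - v^2/2 + v^3)) (1/(1+v) - (1 - v + 3*v^2)) v := by
  have h1 : HasDerivAt (fun v : ℝ => 1 + v) 1 v := by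
    simpa using (hasDerivAt_id v).const_add 1
  have h2 : HasDerivAt (fun v : ℝ => log (1+v)) (1/(1+v)) v := by
    simpa using h1.log (by linarith)
  have h3 : HasDerivAt (fun v : ℝ => v - v^2/2 + v^3) (1 - v + 3*v^2) v := by
    have := ((hasDerivAt_id v).sub ((hasDerivAt_pow 2 v).div_const 2)).add
      (hasDerivAt_pow 3 v)
    exact this.congr_deriv (by simp)
  exact h2.sub h3

lemma logK_anti : AntitoneOn (fun v : ℝ => log (1+v) - (v - v^2/2 + v^3))
    (Set.Icc (-(1/2) : ℝ) 0) := by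
  apply antitoneOn_of_deriv_nonpos (convex_Icc _ _)
  · intro v hv
    have hv' : (-1:ℝ) < v := by
      rcases hv with ⟨h, _⟩; linarith
    exact ((logK_deriv hv').differentiableAt).continuousAt.continuousWithinAt
  · intro v hv
    rw [interior_Icc] at hv
    have hv' : (-1:ℝ) < v := by rcases hv with ⟨h, _⟩; linarith
    exact ((logK_deriv hv').differentiableAt).differentiableWithinAt
  · intro v hv
    rw [interior_Icc] at hv
    rcases hv with ⟨h1, h2⟩
    have hv' : (-1:ℝ) < v := by linarith
    rw [(logK_deriv hv').deriv]
    have hp : (0:ℝ) < 1 + v := by linarith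
    have : 1/(1+v) - (1 - v + 3*v^2) = -(v^2*(2+3*v)/(1+v)) := by field_simp; ring
    rw [this]
    simp only [neg_nonpos]
    have : (0:ℝ) ≤ 2 + 3*v := by linarith
    positivity

lemma abs_log_taylor {u : ℝ} (hu : -(1/2) ≤ u) :
    |log (1+u) - (u - u^2/2)| ≤ |u|^3 := by
  rcases le_or_gt 0 u with h | h
  · have h1 : (0:ℝ) ≤ log (1+u) - (u - u^2/2) := by
      have := logF_mono (Set.mem_Ici.mpr (by norm_num : (-(1/2):ℝ) ≤ 0))
        (Set.mem_Ici.mpr (le_trans (by norm_num) h)) h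
      simpa using this
    have h2 : log (1+u) - (u - u^2/2 + u^3/3) ≤ 0 := by
      have := logG_anti (Set.mem_Ici.mpr (le_refl (0:ℝ))) (Set.mem_Ici.mpr h) h
      simpa using this
    rw [abs_of_nonneg h1, abs_of_nonneg h]
    nlinarith [pow_nonneg h 3]
  · have h1 : log (1+u) - (u - u^2/2) ≤ 0 := by
      have := logF_mono (Set.mem_Ici.mpr hu) (Set.mem_Ici.mpr (by norm_num : (-(1/2):ℝ) ≤ 0)) h.le
      simpa using this
    have h2 : (0:ℝ) ≤ log (1+u) - (u - u^2/2 + u^3) := by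
      have := logK_anti (Set.mem_Icc.mpr ⟨hu, h.le⟩)
        (Set.mem_Icc.mpr ⟨by norm_num, le_refl 0⟩) h.le
      simpa using this
    rw [abs_of_nonpos h1, abs_of_neg h]
    nlinarith

noncomputable def eps (x : ℕ) : ℝ :=
  Real.log (Nat.factorial x : ℝ)
    - ((x:ℝ) * log x - x + log x / 2 + log (2*π) / 2)

lemma eps_succ (n : ℕ) :
    eps (n+1) = log (Stirling.stirlingSeq (n+1)) - log π / 2 := by
  rw [Stirling.log_stirlingSeq_formula]
  have hn : (0:ℝ) < ((n+1 : ℕ):ℝ) := by positivity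
  have he : log (((n+1:ℕ):ℝ) / exp 1) = log ((n+1:ℕ):ℝ) - 1 := by
    rw [Real.log_div (ne_of_gt hn) (exp_ne_zero 1), Real.log_exp]
  have h2 : log (2 * ((n+1:ℕ):ℝ)) = log 2 + log ((n+1:ℕ):ℝ) :=
    Real.log_mul (by norm_num) (ne_of_gt hn)
  have h3 : log (2*π) = log 2 + log π := Real.log_mul (by norm_num) (ne_of_gt pi_pos)
  unfold eps
  rw [he, h2, h3]
  push_cast
  ring

lemma log_stirling_telescope (n : ℕ) (hn : 1 ≤ n) (m : ℕ) :
    log (Stirling.stirlingSeq (n+1)) - log (Stirling.stirlingSeq (n+1+m))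
      ≤ (1/4) * (1/(n:ℝ) - 1/((n:ℝ)+(m:ℝ))) := by
  induction m with
  | zero => simp
  | succ m ih =>
    have key : log (Stirling.stirlingSeq (n+m+1)) - log (Stirling.stirlingSeq (n+m+2)) ≤ _ :=
        Stirling.log_stirlingSeq_sub_log_stirlingSeq_succ (n+m+1)
    have hcast : ((n + m + 1 : ℕ) : ℝ) = (n:ℝ) + (m:ℝ) + 1 := by push_cast; ring
    rw [hcast] at key
    have hn1 : (1:ℝ) ≤ (n:ℝ) := by exact_mod_cast hn
    have hm0 : (0:ℝ) ≤ (m:ℝ) := Nat.cast_nonneg m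
    have hstep : 1 / (4 * ((n:ℝ)+(m:ℝ)+1)^2)
        ≤ (1/4) * (1/((n:ℝ)+(m:ℝ)) - 1/((n:ℝ)+(m:ℝ)+1)) := by
      have hp1 : (0:ℝ) < (n:ℝ)+(m:ℝ) := by linarith
      have hp2 : (0:ℝ) < (n:ℝ)+(m:ℝ)+1 := by linarith
      have heq : 1/((n:ℝ)+(m:ℝ)) - 1/((n:ℝ)+(m:ℝ)+1)
          = 1/(((n:ℝ)+(m:ℝ))*((n:ℝ)+(m:ℝ)+1)) := by
        rw [div_sub_div _ _ (ne_of_gt hp1) (ne_of_gt hp2)]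
        congr 1
        ring
      rw [heq]
      have e1 : (1:ℝ)/4 * (1/(((n:ℝ)+(m:ℝ))*((n:ℝ)+(m:ℝ)+1)))
          = 1/(4*(((n:ℝ)+(m:ℝ))*((n:ℝ)+(m:ℝ)+1))) := by
        rw [one_div_mul_one_div]
      rw [e1]
      apply one_div_le_one_div_of_le (by positivity)
      nlinarith
    have hidx : n + 1 + (m + 1) = (n + m) + 2 := by omega
    rw [hidx]
    have hidx2 : n + m + 1 = n + 1 + m := by omega
    rw [hidx2] at key
    push_cast
    push_cast at ih
    have hassoc : (n:ℝ) + ((m:ℝ) + 1) = (n:ℝ) + (m:ℝ) + 1 := by ring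
    rw [hassoc]
    linarith
  
lemma log_stirling_ge_pi (n : ℕ) :
    log π / 2 ≤ log (Stirling.stirlingSeq (n+1)) := by
  have hlim : Tendsto (fun k : ℕ => Real.log (Stirling.stirlingSeq (k+1))) atTop
      (𝓝 (log (Real.sqrt π))) := by
    have h1 : Tendsto (fun k : ℕ => Stirling.stirlingSeq (k+1)) atTop (𝓝 (Real.sqrt π)) := by
      have := Stirling.tendsto_stirlingSeq_sqrt_pi.comp (tendsto_add_atTop_nat 1)
      exact this
    exact h1.log (ne_of_gt (Real.sqrt_pos.mpr pi_pos))
  have hanti := Stirling.log_stirlingSeq'_antitone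
  have h := hanti.le_of_tendsto hlim n
  rw [Real.log_sqrt pi_pos.le] at h
  simpa using h

lemma eps_succ_nonneg (n : ℕ) : 0 ≤ eps (n+1) := by
  rw [eps_succ]
  have := log_stirling_ge_pi n
  linarith

lemma eps_succ_le (n : ℕ) (hn : 1 ≤ n) : eps (n+1) ≤ 1/(4*(n:ℝ)) := by
  rw [eps_succ]
  have hlim : Tendsto (fun m : ℕ => Real.log (Stirling.stirlingSeq (n+1+m))) atTop
      (𝓝 (log (Real.sqrt π))) := by
    have h1 : Tendsto (fun m : ℕ => Stirling.stirlingSeq (n+1+m)) atTop (𝓝 (Real.sqrt π)) := by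
      have h2 := Stirling.tendsto_stirlingSeq_sqrt_pi.comp (tendsto_add_atTop_nat (n+1))
      refine h2.congr fun m => ?_
      simp [Function.comp, Nat.add_comm]
    exact h1.log (ne_of_gt (Real.sqrt_pos.mpr pi_pos))
  have hn1 : (1:ℝ) ≤ (n:ℝ) := by exact_mod_cast hn
  have key : log (Real.sqrt π) ≥ log (Stirling.stirlingSeq (n+1)) - (1/4) * (1/(n:ℝ)) := by
    apply ge_of_tendsto hlim
    filter_upwards with m
    have h1 := log_stirling_telescope n hn m
    have h2 : (0:ℝ) < (n:ℝ) + (m:ℝ) := by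
      have : (0:ℝ) ≤ (m:ℝ) := Nat.cast_nonneg m
      linarith
    have h3 : (0:ℝ) ≤ 1/((n:ℝ)+(m:ℝ)) := by positivity
    linarith
  rw [Real.log_sqrt pi_pos.le] at key
  have : 1/(4*(n:ℝ)) = (1/4) * (1/(n:ℝ)) := by ring
  linarith [key]

lemma two_pi_bounds : (1:ℝ) ≤ 2*π ∧ (2:ℝ)*π ≤ 9 := by
  constructor <;> nlinarith [pi_gt_three, pi_lt_d2]

lemma eps_abs (x : ℕ) : |eps x| ≤ 4 * (1/((x:ℝ)+1)) := by
  match x with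
  | 0 =>
    have : eps 0 = -(log (2*π) / 2) := by
      unfold eps
      simp
    rw [this, abs_neg]
    have h1 : (0:ℝ) ≤ log (2*π) := Real.log_nonneg two_pi_bounds.1
    have h2 : log (2*π) ≤ 8 := by
      have := Real.log_le_sub_one_of_pos (by positivity : (0:ℝ) < 2*π)
      nlinarith [two_pi_bounds.2]
    rw [abs_of_nonneg (by positivity)]
    norm_num
    linarith
  | 1 =>
    have h0 := eps_succ_nonneg 0
    have hub : eps 1 ≤ 1 := by
      rw [eps_succ 0, Stirling.stirlingSeq_one]
      have h1 : log (exp 1 / Real.sqrt 2) = 1 - log (Real.sqrt 2) := by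
        rw [Real.log_div (exp_ne_zero 1) (by positivity), Real.log_exp]
      rw [h1]
      have h2 : (0:ℝ) ≤ log (Real.sqrt 2) := Real.log_nonneg (by
        rw [show (1:ℝ) = Real.sqrt 1 from (Real.sqrt_one).symm]
        exact Real.sqrt_le_sqrt (by norm_num))
      have h3 : (0:ℝ) ≤ log π := Real.log_nonneg (by nlinarith [pi_gt_three])
      linarith
    rw [abs_of_nonneg h0]
    norm_num
    linarith
  | (n+2) =>
    have h0 : 0 ≤ eps (n+2) := eps_succ_nonneg (n+1)
    have hub : eps (n+2) ≤ 1/(4*((n:ℝ)+1)) := by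
      have h := eps_succ_le (n+1) (by omega)
      have hcast2 : ((n+1 : ℕ):ℝ) = (n:ℝ) + 1 := by push_cast; ring
      rw [hcast2] at h
      exact h
    rw [abs_of_nonneg h0]
    have hn : (0:ℝ) ≤ (n:ℝ) := Nat.cast_nonneg n
    have hcast : ((n+2 : ℕ):ℝ) = (n:ℝ) + 2 := by push_cast; ring
    rw [hcast]
    have h1 : 4 * (1/((n:ℝ)+2+1)) = 4/((n:ℝ)+3) := by ring
    rw [h1]
    have h2 : 1/(4*((n:ℝ)+1)) ≤ 4/((n:ℝ)+3) := by
      rw [div_le_div_iff₀ (by positivity) (by positivity)]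
      nlinarith
    linarith
  

noncomputable def uu (s : ℝ) (x : ℕ) : ℝ := ((x:ℝ) + 1 - s)/s
noncomputable def lg (s : ℝ) (x : ℕ) : ℝ := log (((x:ℝ)+1)/s)
noncomputable def rA (s : ℝ) (x : ℕ) : ℝ := lg s x - (uu s x - (uu s x)^2/2)
noncomputable def mm (s : ℝ) (x : ℕ) : ℝ := log ((x:ℝ)/s)
noncomputable def zz (s : ℝ) (x : ℕ) : ℝ := ((x:ℝ) - s)/s
noncomputable def rB (s : ℝ) (x : ℕ) : ℝ := mm s x - zz s x
noncomputable def wlo (s : ℝ) (x : ℕ) : ℝ := exp (s/2 - 1 - (x:ℝ))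
noncomputable def wlo' (s : ℝ) (x : ℕ) : ℝ := exp (s/2 - (x:ℝ))

section ptwise
variable {s : ℝ}

lemma hs0 : (1:ℝ) ≤ s → 0 < s := fun h => lt_of_lt_of_le one_pos h

-- |log (c/s)| ≤ log s + c  for c ≥ 1
lemma abs_log_ratio (hs1 : 1 ≤ s) {c : ℝ} (hc : 1 ≤ c) : |log (c/s)| ≤ log s + c := by
  have hs' : 0 < s := hs0 hs1
  have hls : 0 ≤ log s := Real.log_nonneg hs1
  have hlc : 0 ≤ log c := Real.log_nonneg hc
  have hcs : log (c/s) = log c - log s :=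
    Real.log_div (by linarith) (ne_of_gt hs')
  rw [hcs]
  rcases le_or_gt (log s) (log c) with h | h
  · rw [abs_of_nonneg (by linarith)]
    have : log c ≤ c - 1 := Real.log_le_sub_one_of_pos (by linarith)
    linarith
  · rw [abs_of_neg (by linarith)]
    linarith

lemma one_plus_uu (hs1 : 1 ≤ s) (x : ℕ) : 1 + uu s x = ((x:ℝ)+1)/s := by
  have hs' : s ≠ 0 := ne_of_gt (hs0 hs1)
  unfold uu; field_simp; ring

lemma one_plus_zz (hs1 : 1 ≤ s) (x : ℕ) : 1 + zz s x = (x:ℝ)/s := by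
  have hs' : s ≠ 0 := ne_of_gt (hs0 hs1)
  unfold zz; field_simp; ring

-- pointwise bound for rA
lemma rA_bound (hs1 : 1 ≤ s) (x : ℕ) :
    |rA s x| ≤ (Real.sqrt s)⁻¹ * (uu s x)^2 + Real.sqrt s * (uu s x)^4/4 + 3*s*wlo s x := by
  have hs' : 0 < s := hs0 hs1
  have hlg : lg s x = log (1 + uu s x) := by rw [one_plus_uu hs1]; unfold lg; rfl
  rcases le_or_gt (-(1/2 : ℝ)) (uu s x) with h | h
  · -- central/upper region
    have h1 : |rA s x| ≤ |uu s x|^3 := by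
      unfold rA
      rw [hlg]
      exact abs_log_taylor h
    have h2 : |uu s x|^3 ≤ (Real.sqrt s)⁻¹ * (uu s x)^2 + Real.sqrt s * (uu s x)^4/4 := by
      set t := Real.sqrt s with hts
      have ht : 0 < t := Real.sqrt_pos.mpr hs'
      have habs : (uu s x)^2 * |uu s x| = |uu s x|^3 := by
        rw [← sq_abs]; ring
      have key : 4*t*|uu s x|^3 ≤ 4*(uu s x)^2 + t^2*(uu s x)^4 := by
        nlinarith [sq_nonneg (t*(uu s x)^2 - 2*|uu s x|), sq_abs (uu s x),
          abs_nonneg (uu s x), habs]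
      have h3 : |uu s x|^3 ≤ (4*(uu s x)^2 + t^2*(uu s x)^4)/(4*t) := by
        rw [le_div_iff₀ (by positivity)]
        linarith
      have h4 : (4*(uu s x)^2 + t^2*(uu s x)^4)/(4*t) = t⁻¹ * (uu s x)^2 + t*(uu s x)^4/4 := by
        field_simp
      linarith [h4 ▸ h3]
    have h5 : 0 ≤ 3*s*wlo s x := by
      have : 0 < wlo s x := exp_pos _
      nlinarith
    linarith
  · -- low tail
    have hx1 : (0:ℝ) < (x:ℝ) + 1 := by positivity
    have hu1 : -1 < uu s x := by
      unfold uu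
      rw [lt_div_iff₀ hs']
      linarith
    have hulow : (x:ℝ) + 1 < s/2 := by
      unfold uu at h
      rw [div_lt_iff₀ hs'] at h
      linarith
    have hwlo : 1 ≤ wlo s x := by
      apply Real.one_le_exp
      linarith
    have hlgabs : |lg s x| ≤ log s := by
      unfold lg
      have hq : (0:ℝ) < ((x:ℝ)+1)/s := by positivity
      have hq1 : ((x:ℝ)+1)/s < 1 := by
        rw [div_lt_one hs']
        linarith
      have hneg : log (((x:ℝ)+1)/s) < 0 := Real.log_neg hq hq1
      rw [abs_of_neg hneg, ← Real.log_inv]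
      apply Real.log_le_log (by positivity)
      rw [inv_div, div_le_iff₀ hx1]
      nlinarith
    have hlog_le : log s ≤ s - 1 := Real.log_le_sub_one_of_pos hs'
    have huabs : |uu s x| ≤ 1 := by
      rw [abs_le]
      constructor <;> nlinarith [h.le, hu1]
    have h1 : |rA s x| ≤ |lg s x| + |uu s x| + (uu s x)^2/2 := by
      unfold rA
      have := abs_sub (lg s x) (uu s x - (uu s x)^2/2)
      calc |lg s x - (uu s x - (uu s x)^2/2)| ≤ |lg s x| + |uu s x - (uu s x)^2/2| :=
            abs_sub _ _
        _ ≤ |lg s x| + (|uu s x| + (uu s x)^2/2) := by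
            have h2 := abs_sub (uu s x) ((uu s x)^2/2)
            have h3 : |(uu s x)^2/2| = (uu s x)^2/2 := abs_of_nonneg (by positivity)
            linarith [abs_sub (uu s x) ((uu s x)^2/2), h3]
        _ = |lg s x| + |uu s x| + (uu s x)^2/2 := by ring
    have hu2 : (uu s x)^2 ≤ 1 := by nlinarith [sq_abs (uu s x), abs_nonneg (uu s x)]
    have h2 : |rA s x| ≤ 3*s := by
      calc |rA s x| ≤ log s + 1 + 1/2 := by linarith
        _ ≤ 3*s := by linarith
    have h3 : 3*s ≤ 3*s*wlo s x := by nlinarith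
    have h4 : 0 ≤ (Real.sqrt s)⁻¹ * (uu s x)^2 + Real.sqrt s * (uu s x)^4/4 := by positivity
    linarith

-- pointwise bound for rB
lemma rB_bound (hs1 : 1 ≤ s) (x : ℕ) : |rB s x| ≤ 2*(zz s x)^2 + 2*s*wlo' s x := by
  have hs' : 0 < s := hs0 hs1
  match x with
  | 0 =>
    have h1 : rB s 0 = 1 := by
      unfold rB mm zz
      simp
      rw [neg_div, neg_neg, div_self hs'.ne']
    rw [h1]
    have h2 : 1 ≤ wlo' s 0 := by
      apply Real.one_le_exp
      simp
      linarith
    have h3 : 0 ≤ (zz s 0)^2 := sq_nonneg _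
    rw [abs_one]
    have h4 : 2*s*1 ≤ 2*s*wlo' s 0 := by nlinarith
    nlinarith
  | (n+1) =>
    set x := n + 1 with hxdef
    have hx1 : (1:ℝ) ≤ (x:ℝ) := by
      rw [hxdef]; push_cast; linarith [Nat.cast_nonneg (α := ℝ) n]
    have hmz : mm s x = log (1 + zz s x) := by rw [one_plus_zz hs1]; unfold mm; rfl
    rcases le_or_gt (-(1/2 : ℝ)) (zz s x) with h | h
    · rcases le_or_gt (zz s x) (1/2) with h2 | h2
      · -- central
        have key := abs_log_taylor h
        have habs3 : |zz s x|^3 ≤ (zz s x)^2/2 := by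
          have : |zz s x| ≤ 1/2 := abs_le.mpr ⟨h, h2⟩
          nlinarith [sq_abs (zz s x), abs_nonneg (zz s x), sq_nonneg (zz s x)]
        have h3 : |rB s x| ≤ (zz s x)^2 := by
          unfold rB
          rw [hmz]
          have htri := abs_sub_le (log (1 + zz s x)) (zz s x - (zz s x)^2/2) (zz s x)
          have he : |(zz s x - (zz s x)^2/2) - zz s x| = (zz s x)^2/2 := by
            rw [show (zz s x - (zz s x)^2/2) - zz s x = -((zz s x)^2/2) from by ring,
              abs_neg, abs_of_nonneg (by positivity)]
          rw [he] at htri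
          linarith [key, habs3]
        have : 0 ≤ 2*s*wlo' s x := by
          have hw : 0 < wlo' s x := exp_pos _
          nlinarith
        nlinarith [sq_nonneg (zz s x)]
      · -- upper
        have hz0 : (0:ℝ) < 1 + zz s x := by linarith
        have hup : log (1 + zz s x) ≤ zz s x := by
          have := Real.log_le_sub_one_of_pos hz0
          linarith
        have hlo : 0 ≤ log (1 + zz s x) := Real.log_nonneg (by linarith)
        have h3 : |rB s x| ≤ zz s x := by
          unfold rB
          rw [hmz, abs_of_nonpos (by linarith)]
          linarith
        have h4 : zz s x ≤ 2*(zz s x)^2 := by nlinarith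
        have : 0 ≤ 2*s*wlo' s x := by
          have hw : 0 < wlo' s x := exp_pos _
          nlinarith
        linarith
    · -- low tail
      have hzlow : (x:ℝ) < s/2 := by
        unfold zz at h
        rw [div_lt_iff₀ hs'] at h
        linarith
      have hwlo : 1 ≤ wlo' s x := by
        apply Real.one_le_exp
        linarith
      have hz1 : -1 < zz s x := by
        unfold zz
        rw [lt_div_iff₀ hs']
        linarith
      have hzabs : |zz s x| ≤ 1 := abs_le.mpr ⟨by linarith, by linarith⟩
      have hmabs : |mm s x| ≤ log s := by
        unfold mm
        have hq : (0:ℝ) < (x:ℝ)/s := by positivity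
        have hq1 : (x:ℝ)/s < 1 := by
          rw [div_lt_one hs']
          linarith
        have hneg : log ((x:ℝ)/s) < 0 := Real.log_neg hq hq1
        rw [abs_of_neg hneg, ← Real.log_inv]
        apply Real.log_le_log (by positivity)
        rw [inv_div, div_le_iff₀ (by linarith : (0:ℝ) < (x:ℝ))]
        nlinarith
      have hlog_le : log s ≤ s - 1 := Real.log_le_sub_one_of_pos hs'
      have h1 : |rB s x| ≤ log s + 1 := by
        unfold rB
        calc |mm s x - zz s x| ≤ |mm s x| + |zz s x| := abs_sub _ _
          _ ≤ log s + 1 := by linarith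
      have h2 : |rB s x| ≤ 2*s := by linarith
      have h3 : 2*s ≤ 2*s*wlo' s x := by nlinarith
      have h4 : 0 ≤ 2*(zz s x)^2 := by positivity
      linarith

end ptwise

noncomputable def gg (s : ℝ) (x : ℕ) : ℝ := s - (x:ℝ)*log s + log (Nat.factorial x : ℝ)
noncomputable def AA (s : ℝ) (x : ℕ) : ℝ := (x:ℝ) * mm s x - (x:ℝ) + s


section sums
variable {s : ℝ}
lemma two_pow_sq (x : ℕ) : ((2:ℝ)^x)*(2:ℝ)^x = (4:ℝ)^x := by
  rw [← mul_pow]; norm_num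

lemma mm_succ (x : ℕ) : mm s (x+1) = lg s x := by
  unfold mm lg
  push_cast
  rfl

-- crude bounds
lemma lg_crude (hs1 : 1 ≤ s) (x : ℕ) : |lg s x| ≤ (s+1) * 2^x := by
  have h1 := abs_log_ratio hs1 (c := (x:ℝ)+1)
    (by have := Nat.cast_nonneg (α := ℝ) x; linarith)
  have h2 : log s ≤ s - 1 := Real.log_le_sub_one_of_pos (hs0 hs1)
  have h3 := cast_succ_le_two_pow x
  have h4 : (1:ℝ) ≤ 2^x := one_le_pow₀ (by norm_num)
  have : |lg s x| ≤ log s + ((x:ℝ)+1) := h1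
  nlinarith [hs0 hs1]

lemma mm_crude (hs1 : 1 ≤ s) (x : ℕ) : |mm s x| ≤ (s+1) * 2^x := by
  match x with
  | 0 =>
    have : mm s 0 = 0 := by unfold mm; simp
    rw [this, abs_zero]
    have h4 : (1:ℝ) ≤ 2^(0:ℕ) := by norm_num
    nlinarith [hs0 hs1]
  | (n+1) =>
    have h1 := abs_log_ratio hs1 (c := ((n+1:ℕ):ℝ)) (by exact_mod_cast Nat.one_le_iff_ne_zero.mpr (by omega))
    have h2 : log s ≤ s - 1 := Real.log_le_sub_one_of_pos (hs0 hs1)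
    have h3 : ((n+1:ℕ):ℝ) ≤ 2^(n+1) := by
      have := cast_succ_le_two_pow (n+1)
      push_cast at this ⊢
      linarith
    have h4 : (1:ℝ) ≤ 2^(n+1) := one_le_pow₀ (by norm_num)
    have : |mm s (n+1)| ≤ log s + ((n+1:ℕ):ℝ) := h1
    have h5 : (0:ℝ) < s := hs0 hs1
    nlinarith

lemma uu_crude (hs1 : 1 ≤ s) (x : ℕ) : |uu s x| ≤ (s+1) * 2^x := by
  have h5 : (0:ℝ) < s := hs0 hs1
  have h3 := cast_succ_le_two_pow x
  have h4 : (1:ℝ) ≤ 2^x := one_le_pow₀ (by norm_num)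
  unfold uu
  rw [abs_div, abs_of_pos h5, div_le_iff₀ h5]
  have : |(x:ℝ) + 1 - s| ≤ (x:ℝ) + 1 + s := by
    rw [abs_le]; constructor <;> nlinarith [Nat.cast_nonneg (α := ℝ) x]
  have e1 : (0:ℝ) ≤ 2^x := by positivity
  have h6 : (1:ℝ)*2^x ≤ s*2^x := mul_le_mul_of_nonneg_right hs1 e1
  have h7 : s*((x:ℝ)+1) ≤ s*2^x := mul_le_mul_of_nonneg_left h3 h5.le
  have h8 : s*1 ≤ s*2^x := mul_le_mul_of_nonneg_left h4 h5.le
  have h9 : 1*(s*2^x) ≤ s*(s*2^x) := mul_le_mul_of_nonneg_right hs1 (mul_nonneg h5.le e1)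
  nlinarith [h6, h7, h8, h9, this]

lemma zz_crude (hs1 : 1 ≤ s) (x : ℕ) : |zz s x| ≤ (s+1) * 2^x := by
  have h5 : (0:ℝ) < s := hs0 hs1
  have h3 := cast_succ_le_two_pow x
  have h4 : (1:ℝ) ≤ 2^x := one_le_pow₀ (by norm_num)
  unfold zz
  rw [abs_div, abs_of_pos h5, div_le_iff₀ h5]
  have : |(x:ℝ) - s| ≤ (x:ℝ) + s := by
    rw [abs_le]; constructor <;> nlinarith [Nat.cast_nonneg (α := ℝ) x]
  have e1 : (0:ℝ) ≤ 2^x := by positivity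
  have h6 : (1:ℝ)*2^x ≤ s*2^x := mul_le_mul_of_nonneg_right hs1 e1
  have h7 : s*((x:ℝ)+1) ≤ s*2^x := mul_le_mul_of_nonneg_left h3 h5.le
  have h8 : s*1 ≤ s*2^x := mul_le_mul_of_nonneg_left h4 h5.le
  have h9 : 1*(s*2^x) ≤ s*(s*2^x) := mul_le_mul_of_nonneg_right hs1 (mul_nonneg h5.le e1)
  nlinarith [h6, h7, h8, h9, this]

lemma sum_lg (hs1 : 1 ≤ s) : Summable fun x => q s x * lg s x :=
  summable_dom s (hs0 hs1).le _ (s+1) 2 (lg_crude hs1)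

lemma sum_mm (hs1 : 1 ≤ s) : Summable fun x => q s x * mm s x :=
  summable_dom s (hs0 hs1).le _ (s+1) 2 (mm_crude hs1)

lemma sum_u (hs1 : 1 ≤ s) : Summable fun x => q s x * uu s x :=
  summable_dom s (hs0 hs1).le _ (s+1) 2 (uu_crude hs1)

lemma sum_z (hs1 : 1 ≤ s) : Summable fun x => q s x * zz s x :=
  summable_dom s (hs0 hs1).le _ (s+1) 2 (zz_crude hs1)

lemma sq_crude {f : ℕ → ℝ} (hf : ∀ x, |f x| ≤ (s+1)*2^x) (hs1 : 1 ≤ s) (x : ℕ) :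
    |(f x)^2| ≤ (s+1)^2 * 4^x := by
  have h := hf x
  have h2 : |(f x)^2| = |f x| * |f x| := by rw [← abs_mul]; ring_nf
  rw [h2, ← two_pow_sq]
  have h0 : (0:ℝ) ≤ |f x| := abs_nonneg _
  have h4 : (0:ℝ) ≤ (s+1) * 2^x := by nlinarith [hs0 hs1, one_le_pow₀ (show (1:ℝ) ≤ 2 by norm_num) (n := x)]
  calc |f x| * |f x| ≤ ((s+1)*2^x) * ((s+1)*2^x) := by nlinarith
    _ = (s+1)^2 * (2^x * 2^x) := by ring

lemma sum_u2 (hs1 : 1 ≤ s) : Summable fun x => q s x * (uu s x)^2 :=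
  summable_dom s (hs0 hs1).le _ ((s+1)^2) 4 (fun x => by
    have := sq_crude (uu_crude hs1) hs1 x
    calc |(uu s x)^2| ≤ (s+1)^2 * 4^x := this
      _ = (s+1)^2 * 4^x := rfl)

lemma sum_z2 (hs1 : 1 ≤ s) : Summable fun x => q s x * (zz s x)^2 :=
  summable_dom s (hs0 hs1).le _ ((s+1)^2) 4 (fun x => sq_crude (zz_crude hs1) hs1 x)

lemma sum_u4 (hs1 : 1 ≤ s) : Summable fun x => q s x * (uu s x)^4 := by
  apply summable_dom s (hs0 hs1).le _ ((s+1)^4) 16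
  intro x
  have h := sq_crude (uu_crude hs1) hs1 x
  have h2 : |(uu s x)^4| = |(uu s x)^2| * |(uu s x)^2| := by rw [← abs_mul]; ring_nf
  have h0 : (0:ℝ) ≤ |(uu s x)^2| := abs_nonneg _
  have h44 : ((4:ℝ)^x)*(4:ℝ)^x = (16:ℝ)^x := by rw [← mul_pow]; norm_num
  rw [h2, ← h44]
  have h4 : (0:ℝ) ≤ (s+1)^2 * 4^x := by positivity
  calc |(uu s x)^2| * |(uu s x)^2| ≤ ((s+1)^2*4^x) * ((s+1)^2*4^x) := by nlinarith
    _ = (s+1)^4 * (4^x * 4^x) := by ring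

lemma sum_rA (hs1 : 1 ≤ s) : Summable fun x => q s x * rA s x := by
  have h : Summable fun x => (q s x * lg s x - q s x * uu s x) + q s x * ((1/2) * (uu s x)^2) :=
    ((sum_lg hs1).sub (sum_u hs1)).add (summable_smul (1/2) (sum_u2 hs1))
  exact h.congr fun x => by unfold rA; ring

lemma sum_rB (hs1 : 1 ≤ s) : Summable fun x => q s x * rB s x := by
  have h : Summable fun x => q s x * mm s x - q s x * zz s x :=
    (sum_mm hs1).sub (sum_z hs1)
  exact h.congr fun x => by unfold rB; ring

lemma wlo_eq (x : ℕ) : wlo s x = exp (s/2-1) * (exp (-1))^x := by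
  unfold wlo
  rw [← Real.exp_nat_mul, ← Real.exp_add]
  congr 1
  push_cast
  ring

lemma wlo'_eq (x : ℕ) : wlo' s x = exp (s/2) * (exp (-1))^x := by
  unfold wlo'
  rw [← Real.exp_nat_mul, ← Real.exp_add]
  congr 1
  push_cast
  ring

lemma sum_wlo (hs1 : 1 ≤ s) : Summable fun x => q s x * wlo s x := by
  have h : Summable fun x => q s x * (exp (s/2-1) * (exp (-1))^x) :=
    summable_smul _ (summable_geom s (exp (-1)))
  exact h.congr fun x => by rw [← wlo_eq]

lemma sum_wlo' (hs1 : 1 ≤ s) : Summable fun x => q s x * wlo' s x := by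
  have h : Summable fun x => q s x * (exp (s/2) * (exp (-1))^x) :=
    summable_smul _ (summable_geom s (exp (-1)))
  exact h.congr fun x => by rw [← wlo'_eq]

lemma E_wlo (hs1 : 1 ≤ s) : ∑' x, q s x * wlo s x = exp (s/2-1) * exp (s * exp (-1)) := by
  rw [tsum_congr (fun x => by rw [wlo_eq] : ∀ x, q s x * wlo s x = q s x * (exp (s/2-1) * (exp (-1))^x))]
  rw [E_smul, E_geom]

lemma E_wlo' (hs1 : 1 ≤ s) : ∑' x, q s x * wlo' s x = exp (s/2) * exp (s * exp (-1)) := by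
  rw [tsum_congr (fun x => by rw [wlo'_eq] : ∀ x, q s x * wlo' s x = q s x * (exp (s/2) * (exp (-1))^x))]
  rw [E_smul, E_geom]

lemma sum_flog (hs1 : 1 ≤ s) : Summable fun x => q s x * log (x:ℝ) := by
  apply summable_dom s (hs0 hs1).le _ 1 2
  intro x
  match x with
  | 0 => simp
      
  | (n+1) =>
    have hx : (1:ℝ) ≤ ((n+1:ℕ):ℝ) := by exact_mod_cast Nat.one_le_iff_ne_zero.mpr (by omega)
    have h1 : (0:ℝ) ≤ log ((n+1:ℕ):ℝ) := Real.log_nonneg hx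
    have h2 : log ((n+1:ℕ):ℝ) ≤ ((n+1:ℕ):ℝ) - 1 := Real.log_le_sub_one_of_pos (by linarith)
    rw [abs_of_nonneg h1]
    have h3 : ((n:ℝ) + 1) ≤ 2^(n+1) := by
      have := cast_succ_le_two_pow (n+1)
      push_cast at this ⊢
      linarith
    push_cast at h2 ⊢
    linarith

lemma logfact_le (x : ℕ) : log (Nat.factorial x : ℝ) ≤ (x:ℝ)^2 := by
  have h1 : (Nat.factorial x : ℝ) ≤ ((x:ℝ))^x := by
    exact_mod_cast Nat.factorial_le_pow x
  match x with
  | 0 => simp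
  | (n+1) =>
    have hx : (1:ℝ) ≤ ((n+1:ℕ):ℝ) := by exact_mod_cast Nat.one_le_iff_ne_zero.mpr (by omega)
    have h2 : log (Nat.factorial (n+1) : ℝ) ≤ log (((n+1:ℕ):ℝ)^(n+1)) := by
      apply Real.log_le_log (by exact_mod_cast (Nat.factorial_pos (n+1)))
      exact_mod_cast h1
    rw [Real.log_pow] at h2
    have h3 : log ((n+1:ℕ):ℝ) ≤ ((n+1:ℕ):ℝ) := by
      have := Real.log_le_sub_one_of_pos (show (0:ℝ) < ((n+1:ℕ):ℝ) by linarith)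
      linarith
    have h4 : (0:ℝ) ≤ log ((n+1:ℕ):ℝ) := Real.log_nonneg hx
    calc log (Nat.factorial (n+1) : ℝ) ≤ ((n+1:ℕ):ℝ) * log ((n+1:ℕ):ℝ) := h2
      _ ≤ ((n+1:ℕ):ℝ) * ((n+1:ℕ):ℝ) := by nlinarith
      _ = ((n+1:ℕ):ℝ)^2 := by ring

lemma sum_logfact (hs1 : 1 ≤ s) : Summable fun x => q s x * log (Nat.factorial x : ℝ) := by
  apply summable_dom s (hs0 hs1).le _ 2 (exp 1)
  intro x
  have h1 : (0:ℝ) ≤ log (Nat.factorial x : ℝ) := Real.log_nonneg (by exact_mod_cast Nat.one_le_iff_ne_zero.mpr (Nat.factorial_ne_zero x))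
  rw [abs_of_nonneg h1]
  have h2 := logfact_le x
  have h3 := pow_le_exp 2 x
  have : (Nat.factorial 2 : ℝ) = 2 := by norm_num [Nat.factorial]
  rw [this] at h3
  linarith

lemma sum_eps (hs1 : 1 ≤ s) : Summable fun x => q s x * eps x := by
  apply summable_dom s (hs0 hs1).le _ 4 1
  intro x
  have h1 := eps_abs x
  have h2 : 4 * (1/((x:ℝ)+1)) ≤ 4 * 1^x := by
    rw [one_pow]
    have : (1:ℝ) ≤ (x:ℝ)+1 := by
      have := Nat.cast_nonneg (α := ℝ) x; linarith
    have h3 : 1/((x:ℝ)+1) ≤ 1 := by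
      rw [div_le_one (by positivity)]
      linarith
    linarith
  linarith

lemma sum_gg (hs1 : 1 ≤ s) : Summable fun x => q s x * gg s x := by
  have h : Summable fun x => (q s x * s - q s x * (log s * (x:ℝ)))
      + q s x * log (Nat.factorial x : ℝ) :=
    ((summable_C s).sub (summable_smul (log s) (summable_X (hs0 hs1).le))).add (sum_logfact hs1)
  exact h.congr fun x => by unfold gg; ring

lemma sum_xm (hs1 : 1 ≤ s) : Summable fun x => q s x * ((x:ℝ) * mm s x) := by
  apply summable_dom s (hs0 hs1).le _ (s+1) 4
  intro x
  have h1 := mm_crude hs1 x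
  have h2 : (x:ℝ) ≤ 2^x := by
    have := cast_succ_le_two_pow x
    linarith
  have h0 : (0:ℝ) ≤ (x:ℝ) := Nat.cast_nonneg x
  rw [abs_mul, abs_of_nonneg h0, ← two_pow_sq]
  have h4 : (0:ℝ) ≤ (s+1) * 2^x := by
    have := one_le_pow₀ (show (1:ℝ) ≤ 2 by norm_num) (n := x)
    nlinarith [hs0 hs1]
  calc (x:ℝ) * |mm s x| ≤ 2^x * ((s+1)*2^x) := by
        apply mul_le_mul h2 h1 (abs_nonneg _) (by positivity)
    _ = (s+1) * (2^x * 2^x) := by ring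

lemma sum_AA (hs1 : 1 ≤ s) : Summable fun x => q s x * AA s x := by
  have h : Summable fun x => (q s x * ((x:ℝ) * mm s x) - q s x * (x:ℝ)) + q s x * s :=
    ((sum_xm hs1).sub (summable_X (hs0 hs1).le)).add (summable_C s)
  exact h.congr fun x => by unfold AA; ring

lemma sum_chi : Summable fun x : ℕ => q s x * (if x = 0 then log s else 0) := by
  apply summable_of_ne_finset_zero (s := {0})
  intro b hb
  simp only [Finset.mem_singleton] at hb
  simp [hb]

-- identities
lemma gg_split (hs1 : 1 ≤ s) (x : ℕ) :
    gg s x = AA s x + (1/2) * log (x:ℝ) + (eps x + log (2*π)/2) := by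
  have hs' : 0 < s := hs0 hs1
  match x with
  | 0 =>
    unfold gg AA eps mm
    simp
  | (n+1) =>
    have hx : (0:ℝ) < ((n+1:ℕ):ℝ) := by positivity
    unfold gg AA eps mm
    rw [Real.log_div (ne_of_gt hx) (ne_of_gt hs')]
    ring

lemma lg_split (x : ℕ) :
    lg s x = uu s x + ((-(1/2)) * (uu s x)^2 + rA s x) := by
  unfold rA; ring

lemma flog_split (hs1 : 1 ≤ s) (x : ℕ) :
    log (x:ℝ) = mm s x + (log s - (if x = 0 then log s else 0)) := by
  have hs' : 0 < s := hs0 hs1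
  match x with
  | 0 =>
    unfold mm
    simp
  | (n+1) =>
    have hx : (0:ℝ) < ((n+1:ℕ):ℝ) := by positivity
    unfold mm
    rw [Real.log_div (ne_of_gt hx) (ne_of_gt hs')]
    simp

lemma mm_split (x : ℕ) : mm s x = zz s x + rB s x := by unfold rB; ring

-- closed forms
lemma Ec1 (hs1 : 1 ≤ s) : ∑' x, q s x * ((x:ℝ)+1-s) = exp s := by
  have h := E_poly (hs0 hs1).le (1-s) 1 0 0 0
  rw [tsum_congr (fun x : ℕ => by ring :
    ∀ x : ℕ, q s x * ((x:ℝ)+1-s)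
      = q s x * ((1-s) + 1*(x:ℝ) + 0*((x:ℝ))^2 + 0*((x:ℝ))^3 + 0*((x:ℝ))^4)), h]
  ring

lemma Ec2 (hs1 : 1 ≤ s) : ∑' x, q s x * ((x:ℝ)+1-s)^2 = (s+1) * exp s := by
  have h := E_poly (hs0 hs1).le ((1-s)^2) (2*(1-s)) 1 0 0
  rw [tsum_congr (fun x : ℕ => by ring :
    ∀ x : ℕ, q s x * ((x:ℝ)+1-s)^2
      = q s x * ((1-s)^2 + (2*(1-s))*(x:ℝ) + 1*((x:ℝ))^2 + 0*((x:ℝ))^3 + 0*((x:ℝ))^4)), h]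
  ring

lemma Ec4 (hs1 : 1 ≤ s) :
    ∑' x, q s x * ((x:ℝ)+1-s)^4 = (3*s^2+11*s+1) * exp s := by
  have h := E_poly (hs0 hs1).le ((1-s)^4) (4*(1-s)^3) (6*(1-s)^2) (4*(1-s)) 1
  rw [tsum_congr (fun x : ℕ => by ring :
    ∀ x : ℕ, q s x * ((x:ℝ)+1-s)^4
      = q s x * ((1-s)^4 + (4*(1-s)^3)*(x:ℝ) + (6*(1-s)^2)*((x:ℝ))^2
          + (4*(1-s))*((x:ℝ))^3 + 1*((x:ℝ))^4)), h]
  ring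

lemma Ez0 (hs1 : 1 ≤ s) : ∑' x, q s x * ((x:ℝ)-s) = 0 := by
  have h := E_poly (hs0 hs1).le (-s) 1 0 0 0
  rw [tsum_congr (fun x : ℕ => by ring :
    ∀ x : ℕ, q s x * ((x:ℝ)-s)
      = q s x * ((-s) + 1*(x:ℝ) + 0*((x:ℝ))^2 + 0*((x:ℝ))^3 + 0*((x:ℝ))^4)), h]
  ring

lemma Ezz2 (hs1 : 1 ≤ s) : ∑' x, q s x * ((x:ℝ)-s)^2 = s * exp s := by
  have h := E_poly (hs0 hs1).le (s^2) (-2*s) 1 0 0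
  rw [tsum_congr (fun x : ℕ => by ring :
    ∀ x : ℕ, q s x * ((x:ℝ)-s)^2
      = q s x * (s^2 + (-2*s)*(x:ℝ) + 1*((x:ℝ))^2 + 0*((x:ℝ))^3 + 0*((x:ℝ))^4)), h]
  ring

lemma Eu (hs1 : 1 ≤ s) : ∑' x, q s x * uu s x = exp s / s := by
  rw [tsum_congr (fun x : ℕ => by unfold uu; ring :
    ∀ x : ℕ, q s x * uu s x = q s x * ((1/s) * ((x:ℝ)+1-s)))]
  rw [E_smul, Ec1 hs1]
  ring

lemma Eu2 (hs1 : 1 ≤ s) : ∑' x, q s x * (uu s x)^2 = (s+1) * exp s / s^2 := by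
  rw [tsum_congr (fun x : ℕ => by unfold uu; ring :
    ∀ x : ℕ, q s x * (uu s x)^2 = q s x * ((1/s^2) * ((x:ℝ)+1-s)^2))]
  rw [E_smul, Ec2 hs1]
  ring

lemma Eu4 (hs1 : 1 ≤ s) :
    ∑' x, q s x * (uu s x)^4 = (3*s^2+11*s+1) * exp s / s^4 := by
  rw [tsum_congr (fun x : ℕ => by unfold uu; ring :
    ∀ x : ℕ, q s x * (uu s x)^4 = q s x * ((1/s^4) * ((x:ℝ)+1-s)^4))]
  rw [E_smul, Ec4 hs1]
  ring

lemma Ez (hs1 : 1 ≤ s) : ∑' x, q s x * zz s x = 0 := by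
  rw [tsum_congr (fun x : ℕ => by unfold zz; ring :
    ∀ x : ℕ, q s x * zz s x = q s x * ((1/s) * ((x:ℝ)-s)))]
  rw [E_smul, Ez0 hs1]
  ring

lemma Ez2 (hs1 : 1 ≤ s) : ∑' x, q s x * (zz s x)^2 = exp s / s := by
  rw [tsum_congr (fun x : ℕ => by unfold zz; ring :
    ∀ x : ℕ, q s x * (zz s x)^2 = q s x * ((1/s^2) * ((x:ℝ)-s)^2))]
  rw [E_smul, Ezz2 hs1]
  have hs' : (0:ℝ) < s := hs0 hs1
  field_simp

-- main tsum decompositions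
lemma E_lg (hs1 : 1 ≤ s) :
    ∑' x, q s x * lg s x
      = exp s / s + ((-(1/2)) * ((s+1) * exp s / s^2) + ∑' x, q s x * rA s x) := by
  rw [tsum_congr (fun x => by rw [lg_split] :
    ∀ x, q s x * lg s x = q s x * (uu s x + ((-(1/2)) * (uu s x)^2 + rA s x)))]
  have h1 : Summable fun x => q s x * ((-(1/2)) * (uu s x)^2) :=
    summable_smul _ (sum_u2 hs1)
  rw [E_add (sum_u hs1) (h1.add (sum_rA hs1) |>.congr fun x => by ring)]
  rw [E_add h1 (sum_rA hs1)]
  rw [E_smul, Eu hs1, Eu2 hs1]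

lemma E_xmm (hs1 : 1 ≤ s) :
    ∑' x, q s x * ((x:ℝ) * mm s x) = s * ∑' x, q s x * lg s x := by
  have hshift := E_shift (s := s) (mm s) ((sum_lg hs1).congr fun x => by rw [← mm_succ])
  rw [hshift]
  congr 1
  exact tsum_congr fun x => by rw [mm_succ]

lemma E_AA (hs1 : 1 ≤ s) :
    ∑' x, q s x * AA s x = s * ∑' x, q s x * lg s x := by
  have hsx : Summable fun x : ℕ => q s x * (s - (x:ℝ)) :=
    ((summable_C s).sub (summable_X (hs0 hs1).le)).congr fun x => by ring
  rw [tsum_congr (fun x : ℕ => by unfold AA; ring :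
    ∀ x : ℕ, q s x * AA s x = q s x * ((x:ℝ) * mm s x + (s - (x:ℝ))))]
  rw [E_add (sum_xm hs1) hsx]
  have h0 : ∑' x, q s x * (s - (x:ℝ)) = 0 := by
    have h := E_poly (hs0 hs1).le s (-1) 0 0 0
    rw [tsum_congr (fun x : ℕ => by ring :
      ∀ x : ℕ, q s x * (s - (x:ℝ))
        = q s x * (s + (-1)*(x:ℝ) + 0*((x:ℝ))^2 + 0*((x:ℝ))^3 + 0*((x:ℝ))^4)), h]
    ring
  rw [h0, E_xmm hs1]
  ring

lemma E_chi : ∑' x : ℕ, q s x * (if x = 0 then log s else 0) = log s := by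
  rw [tsum_eq_single 0 (fun b hb => by simp [hb])]
  simp [q_zero]

lemma E_flog (hs1 : 1 ≤ s) :
    ∑' x, q s x * log (x:ℝ)
      = (∑' x, q s x * rB s x) + (log s * exp s - log s) := by
  rw [tsum_congr (fun x => by rw [flog_split hs1 x] :
    ∀ x, q s x * log (x:ℝ)
      = q s x * (mm s x + (log s - (if x = 0 then log s else 0))))]
  have h2 : Summable fun x : ℕ => q s x * (log s - (if x = 0 then log s else 0)) :=
    ((summable_C (log s)).sub sum_chi).congr fun x => by ring
  rw [E_add (sum_mm hs1) h2]
  have h3 : ∑' x : ℕ, q s x * (log s - (if x = 0 then log s else 0))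
      = log s * exp s - log s := by
    rw [tsum_congr (fun x : ℕ => mul_sub (q s x) _ _)]
    rw [(summable_C (log s)).tsum_sub sum_chi, E_const, E_chi]
  rw [h3]
  congr 1
  -- ∑ q·mm = ∑ q·rB
  rw [tsum_congr (fun x => by rw [mm_split] :
    ∀ x, q s x * mm s x = q s x * (zz s x + rB s x))]
  rw [E_add (sum_z hs1) (sum_rB hs1), Ez hs1]
  ring

lemma E_gg (hs1 : 1 ≤ s) :
    ∑' x, q s x * gg s x
      = s * ∑' x, q s x * lg s x
        + (1/2) * ((∑' x, q s x * rB s x) + (log s * exp s - log s))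
        + ((∑' x, q s x * eps x) + (log (2*π)/2) * exp s) := by
  rw [tsum_congr (fun x => by rw [gg_split hs1 x]; ring :
    ∀ x, q s x * gg s x
      = q s x * (AA s x + ((1/2) * log (x:ℝ) + (eps x + log (2*π)/2))))]
  have hl : Summable fun x => q s x * ((1/2) * log (x:ℝ)) :=
    summable_smul _ (sum_flog hs1)
  have he : Summable fun x => q s x * (eps x + log (2*π)/2) :=
    ((sum_eps hs1).add (summable_C (log (2*π)/2))).congr fun x => by ring
  rw [E_add (sum_AA hs1) ((hl.add he).congr fun x => by ring)]
  rw [E_add hl he]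
  rw [E_add (sum_eps hs1) (summable_C (log (2*π)/2))]
  rw [E_smul, E_AA hs1, E_flog hs1, E_const]
  ring

-- |tsum| ≤ tsum of dominator
lemma E_abs_le (hs : 0 ≤ s) {f h : ℕ → ℝ} (hf : Summable fun x => q s x * f x)
    (hh : Summable fun x => q s x * h x) (hfh : ∀ x, |f x| ≤ h x) :
    |∑' x, q s x * f x| ≤ ∑' x, q s x * h x := by
  have h1 : ∀ x, |q s x * f x| ≤ q s x * h x := fun x => by
    rw [abs_mul, abs_of_nonneg (q_nonneg hs x)]
    exact mul_le_mul_of_nonneg_left (hfh x) (q_nonneg hs x)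
  have h2 : Summable fun x => |q s x * f x| := hf.abs
  calc |∑' x, q s x * f x| ≤ ∑' x, |q s x * f x| := by
        have h2' : Summable fun x => ‖q s x * f x‖ := by
          simpa only [Real.norm_eq_abs] using h2
        have h3 := norm_tsum_le_tsum_norm h2'
        simpa only [Real.norm_eq_abs] using h3
    _ ≤ ∑' x, q s x * h x := Summable.tsum_le_tsum h1 h2 hh

lemma hR1 (hs1 : 1 ≤ s) :
    |∑' x, q s x * rA s x|
      ≤ (Real.sqrt s)⁻¹ * ((s+1) * exp s / s^2)
        + ((Real.sqrt s/4) * ((3*s^2+11*s+1) * exp s / s^4)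
          + (3*s) * (exp (s/2-1) * exp (s * exp (-1)))) := by
  have hd1 : Summable fun x => q s x * ((Real.sqrt s)⁻¹ * (uu s x)^2) :=
    summable_smul _ (sum_u2 hs1)
  have hd2 : Summable fun x => q s x * ((Real.sqrt s/4) * (uu s x)^4) :=
    summable_smul _ (sum_u4 hs1)
  have hd3 : Summable fun x => q s x * ((3*s) * wlo s x) :=
    summable_smul _ (sum_wlo hs1)
  have hd23 : Summable fun x => q s x * ((Real.sqrt s/4) * (uu s x)^4 + (3*s) * wlo s x) :=
    (hd2.add hd3).congr fun x => by ring
  have hdom : Summable fun x => q s x * ((Real.sqrt s)⁻¹ * (uu s x)^2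
      + ((Real.sqrt s/4) * (uu s x)^4 + (3*s) * wlo s x)) :=
    (hd1.add hd23).congr fun x => by ring
  have hb := E_abs_le (hs0 hs1).le (sum_rA hs1) hdom (fun x => by
    have h := rA_bound hs1 x
    calc |rA s x| ≤ (Real.sqrt s)⁻¹ * (uu s x)^2 + Real.sqrt s * (uu s x)^4/4
        + 3*s*wlo s x := h
      _ = (Real.sqrt s)⁻¹ * (uu s x)^2
          + ((Real.sqrt s/4) * (uu s x)^4 + (3*s) * wlo s x) := by ring)
  refine hb.trans (le_of_eq ?_)
  rw [E_add hd1 hd23, E_add hd2 hd3]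
  rw [E_smul, E_smul, E_smul, Eu2 hs1, Eu4 hs1, E_wlo hs1]

lemma hR2 (hs1 : 1 ≤ s) :
    |∑' x, q s x * rB s x|
      ≤ 2 * (exp s / s) + (2*s) * (exp (s/2) * exp (s * exp (-1))) := by
  have hd1 : Summable fun x => q s x * (2 * (zz s x)^2) :=
    summable_smul _ (sum_z2 hs1)
  have hd3 : Summable fun x => q s x * ((2*s) * wlo' s x) :=
    summable_smul _ (sum_wlo' hs1)
  have hdom : Summable fun x => q s x * (2 * (zz s x)^2 + (2*s) * wlo' s x) :=
    (hd1.add hd3).congr fun x => by ring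
  have hb := E_abs_le (hs0 hs1).le (sum_rB hs1) hdom (fun x => by
    have h := rB_bound hs1 x
    calc |rB s x| ≤ 2*(zz s x)^2 + 2*s*wlo' s x := h
      _ = 2 * (zz s x)^2 + (2*s) * wlo' s x := by ring)
  refine hb.trans (le_of_eq ?_)
  rw [E_add hd1 hd3, E_smul, E_smul, Ez2 hs1, E_wlo' hs1]

lemma hR3 (hs1 : 1 ≤ s) :
    |∑' x, q s x * eps x| ≤ 4 * ((exp s - 1)/s) := by
  have hs' : (0:ℝ) < s := hs0 hs1
  have hd : Summable fun x => q s x * (4 * (1/((x:ℝ)+1))) :=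
    summable_smul _ (summable_inv s hs'.ne')
  have hb := E_abs_le hs'.le (sum_eps hs1) hd (fun x => eps_abs x)
  refine hb.trans (le_of_eq ?_)
  rw [E_smul, E_inv s hs'.ne']

-- exact identity for the centered quantity
lemma E_T (hs1 : 1 ≤ s) :
    (∑' x, q s x * gg s x) - (log (2*π*exp 1*s)/2) * exp s
      = s * (∑' x, q s x * rA s x) + (1/2) * (∑' x, q s x * rB s x)
        + (∑' x, q s x * eps x) - exp s/(2*s) - log s/2 := by
  have hs' : (0:ℝ) < s := hs0 hs1
  have hc : log (2*π*exp 1*s) = log (2*π) + 1 + log s := by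
    rw [Real.log_mul (by positivity) (ne_of_gt hs'),
        Real.log_mul (by positivity) (exp_ne_zero 1), Real.log_exp]
  rw [E_gg hs1, E_lg hs1, hc]
  field_simp
  ring

lemma arith_b2 (hs1 : 1 ≤ s) :
    s * ((Real.sqrt s/4) * ((3*s^2+11*s+1) * exp s / s^4)) ≤ 4 * (exp s / Real.sqrt s) := by
  have hs' : (0:ℝ) < s := hs0 hs1
  set t := Real.sqrt s with hts
  have ht : 0 < t := Real.sqrt_pos.mpr hs'
  have ht2 : t^2 = s := Real.sq_sqrt hs'.le
  have hE : 0 < exp s := exp_pos s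
  have heq : s * ((t/4) * ((3*s^2+11*s+1) * exp s / s^4))
      = (3*s^2+11*s+1) * exp s * t / (4*s^3) := by
    field_simp
  rw [heq, show 4 * (exp s / t) = (4 * exp s)/t from by ring,
    div_le_div_iff₀ (by positivity) (by positivity)]
  have hcoef : (3*s^2+11*s+1) * t^2 ≤ 16 * s^3 := by
    rw [ht2]
    nlinarith [hs1, sq_nonneg (s-1), sq_nonneg s]
  nlinarith [mul_pos hE ht, mul_pos (mul_pos hE ht) ht, hE.le, ht.le,
    mul_le_mul_of_nonneg_right hcoef hE.le]

lemma final_arith (hs1 : 1 ≤ s) :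
    exp s/(2*s)
      + s * ((Real.sqrt s)⁻¹ * ((s+1) * exp s / s^2)
          + ((Real.sqrt s/4) * ((3*s^2+11*s+1) * exp s / s^4)
            + (3*s) * (exp (s/2-1) * exp (s * exp (-1)))))
      + (1/2) * (2 * (exp s / s) + (2*s) * (exp (s/2) * exp (s * exp (-1))))
      + 4 * ((exp s - 1)/s) + log s/2
    ≤ exp s * (6/Real.sqrt s + 6/s + 4*s^2*exp (-(s/8)) + exp (-s) * log s) := by
  have hs' : (0:ℝ) < s := hs0 hs1
  set t := Real.sqrt s with hts
  have ht : 0 < t := Real.sqrt_pos.mpr hs'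
  have ht2 : t^2 = s := Real.sq_sqrt hs'.le
  have hE : 0 < exp s := exp_pos s
  have hw : 0 < exp (-(s/8)) := exp_pos _
  have hL : 0 ≤ log s := Real.log_nonneg hs1
  have hinv : exp (-1:ℝ) ≤ 3/8 := by
    rw [Real.exp_neg]
    rw [inv_le_comm₀ (exp_pos 1) (by norm_num)]
    have := Real.exp_one_gt_d9
    linarith
  have hsinv : s * exp (-1:ℝ) ≤ 3*s/8 := by nlinarith
  have key1 : exp (s/2-1) * exp (s * exp (-1)) ≤ exp s * exp (-(s/8)) := by
    rw [← Real.exp_add, ← Real.exp_add]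
    apply exp_le_exp.mpr
    linarith
  have key2 : exp (s/2) * exp (s * exp (-1)) ≤ exp s * exp (-(s/8)) := by
    rw [← Real.exp_add, ← Real.exp_add]
    apply exp_le_exp.mpr
    linarith
  have hEx : exp s * exp (-s) = 1 := by rw [← Real.exp_add]; simp
  -- term bounds
  have b1 : s * ((t)⁻¹ * ((s+1) * exp s / s^2)) ≤ 2 * (exp s / t) := by
    have heq : s * ((t)⁻¹ * ((s+1) * exp s / s^2)) = ((s+1)/s) * (exp s / t) := by
      field_simp
    rw [heq]
    have hc : (s+1)/s ≤ 2 := by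
      rw [div_le_iff₀ hs']
      linarith
    have hpos : 0 ≤ exp s / t := by positivity
    nlinarith
  have b2 := arith_b2 hs1
  have b3 : s * ((3*s) * (exp (s/2-1) * exp (s * exp (-1))))
      ≤ 3*(s^2) * (exp s * exp (-(s/8))) := by
    have h0 : (0:ℝ) ≤ 3*s^2 := by positivity
    calc s * ((3*s) * (exp (s/2-1) * exp (s * exp (-1))))
        = 3*s^2 * (exp (s/2-1) * exp (s * exp (-1))) := by ring
      _ ≤ 3*s^2 * (exp s * exp (-(s/8))) := mul_le_mul_of_nonneg_left key1 h0
      _ = 3*(s^2) * (exp s * exp (-(s/8))) := by ring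
  have b5 : (1/2) * ((2*s) * (exp (s/2) * exp (s * exp (-1))))
      ≤ s^2 * (exp s * exp (-(s/8))) := by
    have h0 : (0:ℝ) ≤ s := hs'.le
    calc (1/2) * ((2*s) * (exp (s/2) * exp (s * exp (-1))))
        = s * (exp (s/2) * exp (s * exp (-1))) := by ring
      _ ≤ s * (exp s * exp (-(s/8))) := mul_le_mul_of_nonneg_left key2 h0
      _ ≤ s^2 * (exp s * exp (-(s/8))) := by
          apply mul_le_mul_of_nonneg_right _ (by positivity)
          nlinarith
  have b6 : 4 * ((exp s - 1)/s) ≤ 4 * (exp s / s) := by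
    gcongr
    linarith
  have hrhs : exp s * (6/t + 6/s + 4*s^2*exp (-(s/8)) + exp (-s) * log s)
      = 6*(exp s/t) + 6*(exp s/s) + 4*(s^2*(exp s * exp (-(s/8)))) + log s := by
    rw [mul_add, mul_add, mul_add,
      show exp s * (exp (-s) * log s) = log s from by rw [← mul_assoc, hEx, one_mul]]
    ring
  rw [hrhs]
  rw [show s * ((t)⁻¹ * ((s+1) * exp s / s^2)
        + ((t/4) * ((3*s^2+11*s+1) * exp s / s^4)
          + (3*s) * (exp (s/2-1) * exp (s * exp (-1)))))
      = s * ((t)⁻¹ * ((s+1) * exp s / s^2))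
        + (s * ((t/4) * ((3*s^2+11*s+1) * exp s / s^4))
          + s * ((3*s) * (exp (s/2-1) * exp (s * exp (-1))))) from by ring]
  rw [show (1/2) * (2 * (exp s / s) + (2*s) * (exp (s/2) * exp (s * exp (-1))))
      = exp s / s + (1/2) * ((2*s) * (exp (s/2) * exp (s * exp (-1)))) from by ring]
  rw [show exp s/(2*s) = (1/2) * (exp s / s) from by ring]
  have hXpos : 0 ≤ exp s / s := by positivity
  have hTpos : 0 ≤ exp s / t := by positivity
  have hYpos : 0 ≤ s^2*(exp s * exp (-(s/8))) := by positivity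
  linarith [b1, b2, b3, b5, b6, hL, hXpos, hTpos, hYpos]

lemma main_bound (hs1 : 1 ≤ s) :
    |(∑' x, q s x * gg s x) - (log (2*π*exp 1*s)/2) * exp s|
      ≤ exp s * (6/Real.sqrt s + 6/s + 4*s^2*exp (-(s/8)) + exp (-s) * log s) := by
  have hs' : (0:ℝ) < s := hs0 hs1
  have hL : 0 ≤ log s := Real.log_nonneg hs1
  have h1 := abs_le.mp (hR1 hs1)
  have h2 := abs_le.mp (hR2 hs1)
  have h3 := abs_le.mp (hR3 hs1)
  have hfa := final_arith hs1
  rw [E_T hs1, abs_le]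
  have hmul1a := mul_le_mul_of_nonneg_left h1.2 hs'.le
  have hmul1b := mul_le_mul_of_nonneg_left h1.1 hs'.le
  have hmul2a := mul_le_mul_of_nonneg_left h2.2 (by norm_num : (0:ℝ) ≤ 1/2)
  have hmul2b := mul_le_mul_of_nonneg_left h2.1 (by norm_num : (0:ℝ) ≤ 1/2)
  have hEpos : 0 < exp s / (2*s) := by positivity
  constructor
  · linarith [hmul1a, hmul1b, hmul2a, hmul2b, h3.1, h3.2, hfa, hEpos, hL, exp_pos s]
  · linarith [hmul1a, hmul1b, hmul2a, hmul2b, h3.1, h3.2, hfa, hEpos, hL, exp_pos s]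

end sums


noncomputable def FF (s : ℝ) : ℝ :=
  6/Real.sqrt s + 6/s + 4*s^2*exp (-(s/8)) + exp (-s) * log s

lemma entropy_diff_bound {s : ℝ} (hs1 : 1 ≤ s) :
    |(-∑' x : ℕ, (Real.exp (-s) * s ^ x / (Nat.factorial x : ℝ)) *
          Real.log (Real.exp (-s) * s ^ x / (Nat.factorial x : ℝ))) -
        (1/2) * Real.log (2 * π * Real.exp 1 * s)| ≤ FF s := by
  have hs' : 0 < s := hs0 hs1
  have hpt : ∀ x : ℕ, -((Real.exp (-s) * s ^ x / (Nat.factorial x : ℝ)) *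
      Real.log (Real.exp (-s) * s ^ x / (Nat.factorial x : ℝ)))
      = exp (-s) * (q s x * gg s x) := by
    intro x
    have hqx : 0 < q s x := q_pos hs' x
    have heq : Real.exp (-s) * s ^ x / (Nat.factorial x : ℝ) = exp (-s) * q s x := by
      unfold q; ring
    rw [heq]
    have hlog : log (exp (-s) * q s x) = -s + ((x:ℝ) * log s - log (Nat.factorial x : ℝ)) := by
      rw [Real.log_mul (exp_ne_zero _) (ne_of_gt hqx), Real.log_exp]
      unfold q
      rw [Real.log_div (pow_ne_zero _ (ne_of_gt hs'))
        (Nat.cast_ne_zero.mpr (Nat.factorial_ne_zero x)), Real.log_pow]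
    rw [hlog]
    unfold gg
    ring
  have hsum : (-∑' x : ℕ, (Real.exp (-s) * s ^ x / (Nat.factorial x : ℝ)) *
      Real.log (Real.exp (-s) * s ^ x / (Nat.factorial x : ℝ)))
      = exp (-s) * ∑' x, q s x * gg s x := by
    rw [← tsum_neg, tsum_congr hpt, tsum_mul_left]
  rw [hsum]
  have hinv : exp (-s) * exp s = 1 := by rw [← Real.exp_add]; simp
  have hdiff : exp (-s) * (∑' x, q s x * gg s x) - (1/2) * Real.log (2 * π * Real.exp 1 * s)
      = exp (-s) * ((∑' x, q s x * gg s x) - (log (2*π*exp 1*s)/2) * exp s) := by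
    rw [mul_sub]
    congr 1
    rw [show exp (-s) * (log (2*π*exp 1*s)/2 * exp s)
      = (exp (-s) * exp s) * (1/2 * log (2*π*exp 1*s)) from by ring, hinv]
    ring
  rw [hdiff, abs_mul, abs_of_pos (exp_pos (-s))]
  calc exp (-s) * |(∑' x, q s x * gg s x) - (log (2*π*exp 1*s)/2) * exp s|
      ≤ exp (-s) * (exp s * FF s) := by
        apply mul_le_mul_of_nonneg_left (main_bound hs1) (exp_pos (-s)).le
    _ = (exp (-s) * exp s) * FF s := by ring
    _ = FF s := by rw [hinv, one_mul]

lemma FF_tendsto : Tendsto (fun s : ℝ => FF s * s ^ ((1:ℝ)/4)) atTop (𝓝 0) := by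
  have c1 : Tendsto (fun s : ℝ => (6/Real.sqrt s) * s ^ ((1:ℝ)/4)) atTop (𝓝 0) := by
    have h := (tendsto_rpow_neg_atTop (y := 1/4) (by norm_num)).const_mul (6:ℝ)
    rw [mul_zero] at h
    apply h.congr'
    filter_upwards [eventually_gt_atTop (0:ℝ)] with s hs
    rw [Real.sqrt_eq_rpow]
    rw [div_mul_eq_mul_div, mul_div_assoc]
    congr 1
    rw [← Real.rpow_sub hs]
    norm_num
  have c2 : Tendsto (fun s : ℝ => (6/s) * s ^ ((1:ℝ)/4)) atTop (𝓝 0) := by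
    have h := (tendsto_rpow_neg_atTop (y := 3/4) (by norm_num)).const_mul (6:ℝ)
    rw [mul_zero] at h
    apply h.congr'
    filter_upwards [eventually_gt_atTop (0:ℝ)] with s hs
    rw [div_mul_eq_mul_div, mul_div_assoc]
    congr 1
    rw [show s ^ ((1:ℝ)/4) / s = s ^ ((1:ℝ)/4) / s ^ (1:ℝ) from by rw [Real.rpow_one],
      ← Real.rpow_sub hs]
    norm_num
  have c3 : Tendsto (fun s : ℝ => (4*s^2*exp (-(s/8))) * s ^ ((1:ℝ)/4)) atTop (𝓝 0) := by
    have h := (tendsto_rpow_mul_exp_neg_mul_atTop_nhds_zero (9/4) (1/8)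
      (by norm_num)).const_mul (4:ℝ)
    rw [mul_zero] at h
    apply h.congr'
    filter_upwards [eventually_gt_atTop (0:ℝ)] with s hs
    have key : s ^ ((9:ℝ)/4) = s^(2:ℕ) * s ^ ((1:ℝ)/4) := by
      rw [show (9:ℝ)/4 = ((2:ℕ):ℝ) + 1/4 from by norm_num, Real.rpow_add hs,
        Real.rpow_natCast]
    rw [key, show -(1/8:ℝ)*s = -(s/8) from by ring]
    ring
  have c4 : Tendsto (fun s : ℝ => (exp (-s) * log s) * s ^ ((1:ℝ)/4)) atTop (𝓝 0) := by
    have h := tendsto_rpow_mul_exp_neg_mul_atTop_nhds_zero (5/4) 1 (by norm_num)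
    apply squeeze_zero' ?_ ?_ h
    · filter_upwards [eventually_ge_atTop (1:ℝ)] with s hs
      have : 0 ≤ log s := Real.log_nonneg hs
      positivity
    · filter_upwards [eventually_ge_atTop (1:ℝ)] with s hs
      have hs' : (0:ℝ) < s := lt_of_lt_of_le one_pos hs
      have h1 : log s ≤ s := by
        have := Real.log_le_sub_one_of_pos hs'
        linarith
      have h2 : exp (-s) * log s * s ^ ((1:ℝ)/4) ≤ exp (-s) * s * s ^ ((1:ℝ)/4) := by
        have hp : (0:ℝ) ≤ s ^ ((1:ℝ)/4) := (Real.rpow_pos_of_pos hs' _).le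
        have he : (0:ℝ) ≤ exp (-s) := (exp_pos _).le
        apply mul_le_mul_of_nonneg_right _ hp
        exact mul_le_mul_of_nonneg_left h1 he
      have key : s ^ ((5:ℝ)/4) = s * s ^ ((1:ℝ)/4) := by
        rw [show (5:ℝ)/4 = 1 + 1/4 from by norm_num, Real.rpow_add hs', Real.rpow_one]
      have h3 : exp (-s) * s * s ^ ((1:ℝ)/4) = s ^ ((5:ℝ)/4) * exp (-1 * s) := by
        rw [key, show (-1:ℝ)*s = -s from by ring]
        ring
      linarith [h2, h3.le, h3.ge]
  have hsum := ((c1.add c2).add c3).add c4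
  rw [add_zero, add_zero, add_zero] at hsum
  apply hsum.congr
  intro s
  unfold FF
  ring



end PE

open PE in
/-- Large-time asymptotic of the Poisson entropy: with
`H(s) = -∑_x p_s(x) log p_s(x)` the Shannon entropy of a Poisson random
variable with mean `s`, there are constants `C > 0` and `s₀ ≥ 1` such that
`|H(s) - (1/2)·log(2πe·s)| ≤ C·s^{-1/4}` for all `s ≥ s₀`. -/
theorem poisson_entropy_large_time : ∃ C s₀ : ℝ, 0 < C ∧ 1 ≤ s₀ ∧
    ∀ s : ℝ, s₀ ≤ s →
      |(-∑' x : ℕ, (Real.exp (-s) * s ^ x / (Nat.factorial x : ℝ)) *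
            Real.log (Real.exp (-s) * s ^ x / (Nat.factorial x : ℝ))) -
          (1/2) * Real.log (2 * π * Real.exp 1 * s)| ≤
        C * s ^ (-(1/4 : ℝ)) := by
  have hev1 : ∀ᶠ s in atTop, FF s * s ^ ((1:ℝ)/4) < 1 :=
    FF_tendsto.eventually_lt_const one_pos
  obtain ⟨s₀', hs₀'⟩ := eventually_atTop.mp hev1
  refine ⟨1, max s₀' 1, one_pos, le_max_right _ _, ?_⟩
  intro s hs
  have hs1 : 1 ≤ s := le_trans (le_max_right _ _) hs
  have hF := entropy_diff_bound hs1
  have hlt : FF s * s ^ ((1:ℝ)/4) < 1 := hs₀' s (le_trans (le_max_left _ _) hs)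
  have hs' : 0 < s := lt_of_lt_of_le one_pos hs1
  have hp : 0 < s ^ ((1:ℝ)/4) := Real.rpow_pos_of_pos hs' _
  rw [one_mul]
  have h2 : FF s ≤ s ^ (-(1/4:ℝ)) := by
    rw [Real.rpow_neg hs'.le, ← one_div, le_div_iff₀ hp]
    exact hlt.le
  exact le_trans hF h2
end

section
/- For s > 0 let p_s : ℕ → ℝ be the Poisson probability mass function p_s(x) = e^{−s}·s^x/x!, and let H(s) = −Σ_{x=0}^∞ p_s(x)·log p_s(x) be the entropy of the Poisson distribution with mean s. There exists a constant C > 0 such that for all s ∈ (0, 1/2], |H(s) − s·log(1/s)| ≤ C·s. -/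
open Real

private lemma exp_tsum' (s : ℝ) : ∑' x : ℕ, s ^ x / (Nat.factorial x : ℝ) = Real.exp s := by
  rw [Real.exp_eq_exp_ℝ, NormedSpace.exp_eq_tsum_div]

private lemma fact_cast_pos (x : ℕ) : (0:ℝ) < (Nat.factorial x : ℝ) := by
  exact_mod_cast x.factorial_pos

private lemma log_fact_le (x : ℕ) :
    Real.log (Nat.factorial x : ℝ) ≤ (x:ℝ) * ((x:ℝ) - 1) := by
  rcases Nat.eq_zero_or_pos x with h | h
  · subst h; simp
  · have hx1 : (1:ℝ) ≤ (x:ℝ) := by exact_mod_cast h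
    calc Real.log (Nat.factorial x : ℝ) ≤ Real.log ((x:ℝ) ^ x) := by
          apply Real.log_le_log (fact_cast_pos x)
          exact_mod_cast Nat.factorial_le_pow x
      _ = (x:ℝ) * Real.log (x:ℝ) := by rw [Real.log_pow]
      _ ≤ (x:ℝ) * ((x:ℝ) - 1) := by
          have := Real.log_le_sub_one_of_pos (by linarith : (0:ℝ) < (x:ℝ))
          nlinarith

private lemma summable1 (s : ℝ) :
    Summable (fun x : ℕ => (x:ℝ) * s ^ x / (Nat.factorial x : ℝ)) := by
  rw [← summable_nat_add_iff 1]
  refine ((Real.summable_pow_div_factorial s).mul_left s).congr fun n => ?_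
  have hf : ((Nat.factorial n : ℝ)) ≠ 0 := (fact_cast_pos n).ne'
  rw [Nat.factorial_succ]
  push_cast
  field_simp
  ring

private lemma summable2 (s : ℝ) :
    Summable (fun x : ℕ => (x:ℝ) * ((x:ℝ) - 1) * s ^ x / (Nat.factorial x : ℝ)) := by
  rw [← summable_nat_add_iff 2]
  refine ((Real.summable_pow_div_factorial s).mul_left (s^2)).congr fun n => ?_
  have hf : ((Nat.factorial n : ℝ)) ≠ 0 := (fact_cast_pos n).ne'
  have : Nat.factorial (n + 2) = (n+2) * ((n+1) * Nat.factorial n) := by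
    rw [Nat.factorial_succ, Nat.factorial_succ]
  rw [this]
  push_cast
  field_simp
  ring

private lemma sum1 (s : ℝ) :
    ∑' x : ℕ, (x:ℝ) * s ^ x / (Nat.factorial x : ℝ) = s * Real.exp s := by
  rw [Summable.tsum_eq_zero_add (summable1 s)]
  have h : ∀ n : ℕ, ((n+1 : ℕ):ℝ) * s ^ (n+1) / (Nat.factorial (n+1) : ℝ)
      = s * (s ^ n / (Nat.factorial n : ℝ)) := by
    intro n
    have hf : ((Nat.factorial n : ℝ)) ≠ 0 := (fact_cast_pos n).ne'
    rw [Nat.factorial_succ]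
    push_cast
    field_simp
    ring
  rw [tsum_congr h, tsum_mul_left, exp_tsum']
  simp

private lemma sum2 (s : ℝ) :
    ∑' x : ℕ, (x:ℝ) * ((x:ℝ) - 1) * s ^ x / (Nat.factorial x : ℝ) = s^2 * Real.exp s := by
  rw [Summable.tsum_eq_zero_add (summable2 s),
    Summable.tsum_eq_zero_add ((summable_nat_add_iff 1).2 (summable2 s))]
  have h : ∀ n : ℕ, ((n+1+1 : ℕ):ℝ) * (((n+1+1 : ℕ):ℝ) - 1) * s ^ (n+1+1) /
      (Nat.factorial (n+1+1) : ℝ) = s^2 * (s ^ n / (Nat.factorial n : ℝ)) := by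
    intro n
    have hf : ((Nat.factorial n : ℝ)) ≠ 0 := (fact_cast_pos n).ne'
    have : Nat.factorial (n + 1 + 1) = (n+2) * ((n+1) * Nat.factorial n) := by
      rw [Nat.factorial_succ, Nat.factorial_succ]
    rw [this]
    push_cast
    field_simp
    ring
  rw [tsum_congr h, tsum_mul_left, exp_tsum']
  norm_num

/-- Small-time asymptotic of the Poisson entropy: with
`H(s) = -∑_x p_s(x) log p_s(x)` the Shannon entropy of a Poisson random
variable with mean `s`, there is a constant `C > 0` such that
`|H(s) - s·log(1/s)| ≤ C·s` for all `s ∈ (0, 1/2]`. -/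
theorem poisson_entropy_small_time : ∃ C : ℝ, 0 < C ∧
    ∀ s : ℝ, 0 < s → s ≤ 1/2 →
      |(-∑' x : ℕ, (Real.exp (-s) * s ^ x / (Nat.factorial x : ℝ)) *
            Real.log (Real.exp (-s) * s ^ x / (Nat.factorial x : ℝ))) -
          s * Real.log (1/s)| ≤ C * s := by
  refine ⟨3/2, by norm_num, fun s hs hs2 => ?_⟩
  set E : ℝ := Real.exp (-s) with hEdef
  have hE : 0 < E := Real.exp_pos _
  have hE1 : E * Real.exp s = 1 := by
    rw [hEdef, ← Real.exp_add, neg_add_cancel, Real.exp_zero]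
  have hq : Summable (fun x : ℕ => s ^ x / (Nat.factorial x : ℝ)) :=
    Real.summable_pow_div_factorial s
  have h1 := summable1 s
  have h2 := summable2 s
  -- summability of the log-factorial series
  have hlognn : ∀ x : ℕ, 0 ≤ s ^ x * Real.log (Nat.factorial x : ℝ) / (Nat.factorial x : ℝ) := by
    intro x
    apply div_nonneg _ (fact_cast_pos x).le
    exact mul_nonneg (pow_nonneg hs.le x)
      (Real.log_nonneg (by exact_mod_cast Nat.one_le_iff_ne_zero.mpr x.factorial_ne_zero))
  have hlogle : ∀ x : ℕ, s ^ x * Real.log (Nat.factorial x : ℝ) / (Nat.factorial x : ℝ)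
      ≤ (x:ℝ) * ((x:ℝ) - 1) * s ^ x / (Nat.factorial x : ℝ) := by
    intro x
    have hx := log_fact_le x
    have hsx : (0:ℝ) ≤ s ^ x := pow_nonneg hs.le x
    have hf := fact_cast_pos x
    rw [div_le_div_iff₀ hf hf]
    nlinarith [mul_le_mul_of_nonneg_right (mul_le_mul_of_nonneg_left hx hsx) hf.le]
  have hlog : Summable (fun x : ℕ =>
      s ^ x * Real.log (Nat.factorial x : ℝ) / (Nat.factorial x : ℝ)) :=
    Summable.of_nonneg_of_le hlognn hlogle h2
  set T : ℝ := ∑' x : ℕ, s ^ x * Real.log (Nat.factorial x : ℝ) / (Nat.factorial x : ℝ)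
    with hTdef
  have hT0 : 0 ≤ T := tsum_nonneg hlognn
  have hTle : T ≤ s^2 * Real.exp s := by
    rw [hTdef, ← sum2 s]
    exact Summable.tsum_le_tsum hlogle hlog h2
  -- rewrite each term of the entropy sum
  have hterm : ∀ x : ℕ, (E * s ^ x / (Nat.factorial x : ℝ)) *
      Real.log (E * s ^ x / (Nat.factorial x : ℝ)) =
      E * ((-s) * (s ^ x / (Nat.factorial x : ℝ))
        + Real.log s * ((x:ℝ) * s ^ x / (Nat.factorial x : ℝ))
        - s ^ x * Real.log (Nat.factorial x : ℝ) / (Nat.factorial x : ℝ)) := by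
    intro x
    have hf : ((Nat.factorial x : ℝ)) ≠ 0 := (fact_cast_pos x).ne'
    have hlogp : Real.log (E * s ^ x / (Nat.factorial x : ℝ))
        = -s + (x:ℝ) * Real.log s - Real.log (Nat.factorial x : ℝ) := by
      rw [Real.log_div (by positivity) hf,
        Real.log_mul (Real.exp_ne_zero _) (by positivity), Real.log_exp,
        Real.log_pow]
    rw [hlogp]
    field_simp
  have hsum : (∑' x : ℕ, (E * s ^ x / (Nat.factorial x : ℝ)) *
      Real.log (E * s ^ x / (Nat.factorial x : ℝ)))
      = E * ((-s) * Real.exp s + Real.log s * (s * Real.exp s) - T) := by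
    rw [tsum_congr hterm, tsum_mul_left,
      Summable.tsum_sub ((hq.mul_left (-s)).add (h1.mul_left (Real.log s)))
        hlog,
      Summable.tsum_add (hq.mul_left (-s)) (h1.mul_left (Real.log s)),
      tsum_mul_left, tsum_mul_left, exp_tsum', sum1, hTdef]
  rw [hsum]
  have hexpr : -(E * ((-s) * Real.exp s + Real.log s * (s * Real.exp s) - T))
      - s * Real.log (1/s) = s + E * T := by
    rw [one_div, Real.log_inv]
    linear_combination (s - s * Real.log s) * hE1
  rw [hexpr]
  have hET : E * T ≤ s^2 := by
    have := mul_le_mul_of_nonneg_left hTle hE.le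
    calc E * T ≤ E * (s^2 * Real.exp s) := this
      _ = s^2 := by linear_combination s^2 * hE1
  have hETnn : 0 ≤ E * T := mul_nonneg hE.le hT0
  rw [abs_of_nonneg (by linarith)]
  nlinarith
end
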